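/- arXiv:2407.09875 — 8 statements merged into one kernel-verified Lean document; each statement's English description precedes it below -/
import Mathlib

section
/- Let α, α₁, α₂ ∈ ℝ and let (A_n)_{n≥0} and (b_n)_{n≥0} be real sequences satisfying the stationary nonisospectral Toda system: for all n ≥ 1, 2α + α₁(b_n − b_{n−1}) + α₂(A_{n+1} − A_{n−1} + b_n² − b_{n−1}²) = 0 and α b_n + α₁(A_{n+1} − A_n) + α₂(A_{n+1}(b_{n+1} + b_n) − A_n(b_{n−1} + b_n)) = 0. Then there exist real constants c₁ and d₁ such that for all n ≥ 1: α₂(A_{n+1} + A_n + b_n²) + α₁ b_n + (2n−1)α + c₁ = 0 and A_n(α₂ b_n + α₁)(α₂ b_{n−1} + α₁) − (α₂ A_n + (n−1)α)² − c₁(α₂ A_n + (n−1)α) + d₁ = 0. -/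
/-- First integrals of the stationary nonisospectral Toda lattice, from which the
asymmetric discrete Painlevé I equation is obtained. Here `A n` plays the role of the
squared recurrence coefficient `a_n²`. -/
theorem stationary_toda_first_integrals
    (α α₁ α₂ : ℝ) (A b : ℕ → ℝ)
    (h1 : ∀ n : ℕ, 1 ≤ n →
      2 * α + α₁ * (b n - b (n - 1))
        + α₂ * (A (n + 1) - A (n - 1) + (b n) ^ 2 - (b (n - 1)) ^ 2) = 0)
    (h2 : ∀ n : ℕ, 1 ≤ n →
      α * b n + α₁ * (A (n + 1) - A n)
        + α₂ * (A (n + 1) * (b (n + 1) + b n) - A n * (b (n - 1) + b n)) = 0) :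
    ∃ c₁ d₁ : ℝ, ∀ n : ℕ, 1 ≤ n →
      (α₂ * (A (n + 1) + A n + (b n) ^ 2) + α₁ * b n + (2 * (n : ℝ) - 1) * α + c₁ = 0) ∧
      (A n * (α₂ * b n + α₁) * (α₂ * b (n - 1) + α₁)
        - (α₂ * A n + ((n : ℝ) - 1) * α) ^ 2
        - c₁ * (α₂ * A n + ((n : ℝ) - 1) * α) + d₁ = 0) := by
  set c₁ : ℝ := -(α₂ * (A 2 + A 1 + (b 1) ^ 2) + α₁ * b 1 + α) with hc₁
  set d₁ : ℝ := -(A 1 * (α₂ * b 1 + α₁) * (α₂ * b 0 + α₁) - (α₂ * A 1) ^ 2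
      - c₁ * (α₂ * A 1)) with hd₁
  refine ⟨c₁, d₁, ?_⟩
  have hF : ∀ n : ℕ, 1 ≤ n →
      α₂ * (A (n + 1) + A n + (b n) ^ 2) + α₁ * b n + (2 * (n : ℝ) - 1) * α + c₁ = 0 := by
    intro n hn
    induction n with
    | zero => omega
    | succ m ih =>
      rcases Nat.eq_or_lt_of_le hn with h | h
      · simp only [← h]
        norm_num [hc₁]
      · have hm : 1 ≤ m := by omega
        have hFm := ih hm
        have h1m := h1 (m + 1) (by omega)
        simp only [Nat.add_sub_cancel] at h1m
        push_cast
        push_cast at hFm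
        linarith [h1m, hFm]
  intro n hn
  refine ⟨hF n hn, ?_⟩
  induction n with
  | zero => omega
  | succ m ih =>
    rcases Nat.eq_or_lt_of_le hn with h | h
    · simp only [← h]
      norm_num [hd₁]
    · have hm : 1 ≤ m := by omega
      have hGm := ih hm
      have hFm := hF m hm
      have h2m := h2 m hm
      simp only [Nat.add_sub_cancel]
      push_cast
      push_cast at hGm hFm
      linear_combination (α₂ * b m + α₁) * h2m - (α₂ * (A (m+1) - A m) + α) * hFm + hGm
end

section
/- Let α, α₁, α₂ ∈ ℝ with α ≠ 0 and α·α₂ < 0. For j ∈ ℕ and t ∈ ℝ define c_j(t) = ∫₀^∞ s^j e^{jαt} exp((α₁/α) s e^{αt} + (α₂/(2α)) s² e^{2αt}) ds. Then each integral converges, each c_j is differentiable on ℝ, and the moments simultaneously satisfy c_j'(t) = α j c_j(t) + α₁ c_{j+1}(t) + α₂ c_{j+2}(t) and c_j'(t) = −α c_j(t) for all j ∈ ℕ and all t ∈ ℝ (equivalently, (j+1)α c_j(t) + α₁ c_{j+1}(t) + α₂ c_{j+2}(t) = 0). -/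
open MeasureTheory

section DeformedMomentAux
open Set Filter Real


private lemma dm_key_bound {a b : ℝ} (hb : b < 0) (s : ℝ) :
    a * s + b * s ^ 2 ≤ a ^ 2 / (-2 * b) + b / 2 * s ^ 2 := by
  have h2b : (0:ℝ) < -2 * b := by linarith
  have h : a * s + b * s ^ 2 - b / 2 * s ^ 2 ≤ a ^ 2 / (-2 * b) := by
    rw [le_div_iff₀ h2b]
    nlinarith [sq_nonneg (b * s + a)]
  linarith

private lemma dm_integrableOn (j : ℕ) (a : ℝ) {b : ℝ} (hb : b < 0) :
    IntegrableOn (fun s : ℝ => s ^ j * Real.exp (a * s + b * s ^ 2)) (Set.Ioi 0) := by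
  have hc : (0:ℝ) < -(b / 2) := by linarith
  have hj : (-1:ℝ) < (j : ℝ) := lt_of_lt_of_le (by norm_num) (Nat.cast_nonneg j)
  have hg : IntegrableOn
      (fun s : ℝ => Real.exp (a ^ 2 / (-2 * b)) * (s ^ j * Real.exp (b / 2 * s ^ 2)))
      (Set.Ioi 0) := by
    have h1 := integrableOn_rpow_mul_exp_neg_mul_sq hc hj
    have h2 : IntegrableOn (fun s : ℝ => s ^ j * Real.exp (b / 2 * s ^ 2)) (Set.Ioi 0) := by
      refine h1.congr_fun (fun x hx => ?_) measurableSet_Ioi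
      simp only [Real.rpow_natCast, neg_neg]
    exact h2.const_mul _
  refine Integrable.mono' hg ?_ ?_
  · exact (Continuous.aestronglyMeasurable (by continuity)).restrict
  · filter_upwards [ae_restrict_mem measurableSet_Ioi] with s hs
    have hs0 : (0:ℝ) < s := hs
    rw [Real.norm_eq_abs, abs_mul, abs_pow, abs_of_pos hs0, Real.abs_exp]
    calc s ^ j * Real.exp (a * s + b * s ^ 2)
        ≤ s ^ j * Real.exp (a ^ 2 / (-2 * b) + b / 2 * s ^ 2) :=
          mul_le_mul_of_nonneg_left (Real.exp_le_exp.2 (dm_key_bound hb s)) (pow_nonneg hs0.le j)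
      _ = Real.exp (a ^ 2 / (-2 * b)) * (s ^ j * Real.exp (b / 2 * s ^ 2)) := by
          rw [Real.exp_add]; ring

private lemma dm_tendsto (k : ℕ) (a : ℝ) {b : ℝ} (hb : b < 0) :
    Tendsto (fun u : ℝ => u ^ k * Real.exp (a * u + b * u ^ 2)) atTop (nhds 0) := by
  have hc : (0:ℝ) < -(b / 2) := by linarith
  have h2 : (fun u : ℝ => u ^ (k:ℝ) * Real.exp (-(-(b / 2)) * u ^ 2)) =o[atTop]
      fun u => Real.exp (-(1/2) * u) := rpow_mul_exp_neg_mul_sq_isLittleO_exp_neg hc _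
  have h3 : Tendsto (fun u : ℝ => Real.exp (-(1/2) * u)) atTop (nhds 0) := by
    apply Real.tendsto_exp_atBot.comp
    exact (tendsto_const_mul_atBot_of_neg (by norm_num)).2 tendsto_id
  have h4 : Tendsto (fun u : ℝ => u ^ k * Real.exp (b / 2 * u ^ 2)) atTop (nhds 0) := by
    have := h2.isBigO.trans_tendsto h3
    simp only [Real.rpow_natCast, neg_neg] at this
    exact this
  have h5 : Tendsto (fun u : ℝ =>
      Real.exp (a ^ 2 / (-2 * b)) * (u ^ k * Real.exp (b / 2 * u ^ 2))) atTop (nhds 0) := by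
    simpa using h4.const_mul (Real.exp (a ^ 2 / (-2 * b)))
  apply squeeze_zero' ?_ ?_ h5
  · filter_upwards [eventually_gt_atTop (0:ℝ)] with u hu
    positivity
  · filter_upwards [eventually_gt_atTop (0:ℝ)] with u hu
    calc u ^ k * Real.exp (a * u + b * u ^ 2)
        ≤ u ^ k * Real.exp (a ^ 2 / (-2 * b) + b / 2 * u ^ 2) :=
          mul_le_mul_of_nonneg_left (Real.exp_le_exp.2 (dm_key_bound hb u)) (pow_nonneg hu.le k)
      _ = Real.exp (a ^ 2 / (-2 * b)) * (u ^ k * Real.exp (b / 2 * u ^ 2)) := by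
          rw [Real.exp_add]; ring

/-- integration by parts identity for the static moments -/
private lemma dm_ibp (j : ℕ) (a : ℝ) {b : ℝ} (hb : b < 0) :
    ((j:ℝ) + 1) * (∫ u in Set.Ioi (0:ℝ), u ^ j * Real.exp (a * u + b * u ^ 2))
      + a * (∫ u in Set.Ioi (0:ℝ), u ^ (j+1) * Real.exp (a * u + b * u ^ 2))
      + 2 * b * (∫ u in Set.Ioi (0:ℝ), u ^ (j+2) * Real.exp (a * u + b * u ^ 2)) = 0 := by
  set φ : ℝ → ℝ := fun u => a * u + b * u ^ 2 with hφ
  set F : ℝ → ℝ := fun u => u ^ (j+1) * Real.exp (φ u) with hF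
  set F' : ℝ → ℝ := fun u =>
    ((j:ℝ) + 1) * (u ^ j * Real.exp (φ u)) + a * (u ^ (j+1) * Real.exp (φ u))
      + 2 * b * (u ^ (j+2) * Real.exp (φ u)) with hF'
  have hderiv : ∀ x ∈ Set.Ici (0:ℝ), HasDerivAt F (F' x) x := by
    intro x _
    have h1 : HasDerivAt φ (a + b * (2 * x)) x := by
      exact (((hasDerivAt_id x).const_mul a).add ((hasDerivAt_pow 2 x).const_mul b)).congr_deriv (by simp)
    have h2 : HasDerivAt F _ x := (hasDerivAt_pow (j+1) x).mul h1.exp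
    convert h2 using 1
    simp only [hF', hφ]
    push_cast
    ring
  have hint : IntegrableOn F' (Set.Ioi 0) := by
    exact (((dm_integrableOn j a hb).const_mul _).add
      ((dm_integrableOn (j+1) a hb).const_mul _)).add
      ((dm_integrableOn (j+2) a hb).const_mul _)
  have htend : Tendsto F atTop (nhds 0) := dm_tendsto (j+1) a hb
  have h0 := integral_Ioi_of_hasDerivAt_of_tendsto' hderiv hint htend
  have hF0 : F 0 = 0 := by simp [hF]
  rw [hF0, sub_zero] at h0
  have hsum : (∫ x in Set.Ioi (0:ℝ), F' x)
      = ((j:ℝ) + 1) * (∫ u in Set.Ioi (0:ℝ), u ^ j * Real.exp (a * u + b * u ^ 2))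
        + a * (∫ u in Set.Ioi (0:ℝ), u ^ (j+1) * Real.exp (a * u + b * u ^ 2))
        + 2 * b * (∫ u in Set.Ioi (0:ℝ), u ^ (j+2) * Real.exp (a * u + b * u ^ 2)) := by
    simp only [hF', hφ]
    have I1 : IntegrableOn (fun u : ℝ => ((j:ℝ)+1) * (u ^ j * Real.exp (a * u + b * u ^ 2)))
        (Set.Ioi 0) := (dm_integrableOn j a hb).const_mul _
    have I2 : IntegrableOn (fun u : ℝ => a * (u ^ (j+1) * Real.exp (a * u + b * u ^ 2)))
        (Set.Ioi 0) := (dm_integrableOn (j+1) a hb).const_mul _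
    have I3 : IntegrableOn (fun u : ℝ => 2 * b * (u ^ (j+2) * Real.exp (a * u + b * u ^ 2)))
        (Set.Ioi 0) := (dm_integrableOn (j+2) a hb).const_mul _
    have I12 : IntegrableOn (fun u : ℝ => ((j:ℝ)+1) * (u ^ j * Real.exp (a * u + b * u ^ 2))
        + a * (u ^ (j+1) * Real.exp (a * u + b * u ^ 2))) (Set.Ioi 0) := I1.add I2
    rw [integral_add I12 I3, integral_add I1 I2,
      integral_const_mul, integral_const_mul, integral_const_mul]
  rw [hsum] at h0
  exact h0

end DeformedMomentAux

/-- The deformed moments `c_j(t) = ∫₀^∞ s^j e^{jαt} exp((α₁/α) s e^{αt} + (α₂/(2α)) s² e^{2αt}) ds`. -/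
noncomputable def deformedMoment (α α₁ α₂ : ℝ) (j : ℕ) (t : ℝ) : ℝ :=
  ∫ s in Set.Ioi (0 : ℝ),
    s ^ j * Real.exp ((j : ℝ) * α * t) *
      Real.exp (α₁ / α * s * Real.exp (α * t) + α₂ / (2 * α) * s ^ 2 * Real.exp (2 * α * t))

section DeformedMomentAux2
open Set Filter Real

private lemma dm_subst (α α₁ α₂ : ℝ) (j : ℕ) (t : ℝ) :
    deformedMoment α α₁ α₂ j t = Real.exp (-(α * t)) *
      ∫ u in Set.Ioi (0:ℝ), u ^ j * Real.exp (α₁ / α * u + α₂ / (2 * α) * u ^ 2) := by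
  have hc : (0:ℝ) < Real.exp (α * t) := Real.exp_pos _
  have key := integral_comp_mul_left_Ioi
    (fun u : ℝ => u ^ j * Real.exp (α₁ / α * u + α₂ / (2 * α) * u ^ 2)) 0 hc
  rw [mul_zero] at key
  have heq : (fun s : ℝ => s ^ j * Real.exp ((j : ℝ) * α * t) *
      Real.exp (α₁ / α * s * Real.exp (α * t) + α₂ / (2 * α) * s ^ 2 * Real.exp (2 * α * t)))
      = fun s : ℝ => (fun u : ℝ => u ^ j * Real.exp (α₁ / α * u + α₂ / (2 * α) * u ^ 2))
          (Real.exp (α * t) * s) := by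
    funext s
    simp only
    rw [mul_pow]
    have e1 : Real.exp (α * t) ^ j = Real.exp ((j : ℝ) * α * t) := by
      rw [← Real.exp_nat_mul]; ring_nf
    have e2 : α₁ / α * (Real.exp (α * t) * s) + α₂ / (2 * α) * (Real.exp (α * t) * s) ^ 2
        = α₁ / α * s * Real.exp (α * t) + α₂ / (2 * α) * s ^ 2 * Real.exp (2 * α * t) := by
      have : Real.exp (2 * α * t) = Real.exp (α * t) ^ 2 := by
        rw [← Real.exp_nat_mul]; ring_nf
      rw [this]; ring
    rw [e1, e2]; ring
  rw [deformedMoment, heq, key, smul_eq_mul, ← Real.exp_neg]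


end DeformedMomentAux2

/-- The moments simultaneously satisfy the nonisospectral evolution
`c_j' = α j c_j + α₁ c_{j+1} + α₂ c_{j+2}` and the stationarity relation `c_j' = −α c_j`. -/
theorem deformedMoment_evolution (α α₁ α₂ : ℝ) (hα : α ≠ 0) (hαα₂ : α * α₂ < 0) :
    (∀ (j : ℕ) (t : ℝ), IntegrableOn
      (fun s : ℝ => s ^ j * Real.exp ((j : ℝ) * α * t) *
        Real.exp (α₁ / α * s * Real.exp (α * t) + α₂ / (2 * α) * s ^ 2 * Real.exp (2 * α * t)))
      (Set.Ioi (0 : ℝ))) ∧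
    (∀ (j : ℕ) (t : ℝ), HasDerivAt (fun u => deformedMoment α α₁ α₂ j u)
      (α * (j : ℝ) * deformedMoment α α₁ α₂ j t
        + α₁ * deformedMoment α α₁ α₂ (j + 1) t
        + α₂ * deformedMoment α α₁ α₂ (j + 2) t) t) ∧
    (∀ (j : ℕ) (t : ℝ), HasDerivAt (fun u => deformedMoment α α₁ α₂ j u)
      (-α * deformedMoment α α₁ α₂ j t) t) := by
  have hb : α₂ / (2 * α) < 0 := by
    have hαα : (0:ℝ) < 2 * (α * α) := by
      have := mul_self_pos.2 hα; linarith
    have h := div_neg_of_neg_of_pos hαα₂ hαα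
    have heq : α₂ / (2 * α) = α * α₂ / (2 * (α * α)) := by
      field_simp
    rw [heq]; exact h
  -- the stationarity derivative, proved first
  have hder3 : ∀ (j : ℕ) (t : ℝ), HasDerivAt (fun u => deformedMoment α α₁ α₂ j u)
      (-α * deformedMoment α α₁ α₂ j t) t := by
    intro j t
    set M : ℝ := ∫ u in Set.Ioi (0:ℝ), u ^ j * Real.exp (α₁ / α * u + α₂ / (2 * α) * u ^ 2)
      with hM
    have hfun : (fun u => deformedMoment α α₁ α₂ j u) = fun u => Real.exp (-(α * u)) * M :=
      funext fun u => dm_subst α α₁ α₂ j u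
    have h1 : HasDerivAt (fun u : ℝ => -(α * u)) (-α) t := by
      exact ((hasDerivAt_id t).const_mul α).neg.congr_deriv (by simp)
    have h2 : HasDerivAt (fun u : ℝ => Real.exp (-(α * u)) * M)
        (Real.exp (-(α * t)) * -α * M) t := (h1.exp).mul_const M
    rw [hfun]
    convert h2 using 1
    rw [dm_subst α α₁ α₂ j t, ← hM]; ring
  refine ⟨?_, ?_, hder3⟩
  · intro j t
    have hb' : α₂ / (2 * α) * Real.exp (2 * α * t) < 0 :=
      mul_neg_of_neg_of_pos hb (Real.exp_pos _)
    have h := (dm_integrableOn j (α₁ / α * Real.exp (α * t)) hb').const_mul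
      (Real.exp ((j : ℝ) * α * t))
    have h' : IntegrableOn (fun s : ℝ => Real.exp ((j : ℝ) * α * t) *
        (s ^ j * Real.exp (α₁ / α * Real.exp (α * t) * s
          + α₂ / (2 * α) * Real.exp (2 * α * t) * s ^ 2))) (Set.Ioi 0) := h
    refine h'.congr_fun (fun s _ => ?_) measurableSet_Ioi
    have e : α₁ / α * Real.exp (α * t) * s + α₂ / (2 * α) * Real.exp (2 * α * t) * s ^ 2
        = α₁ / α * s * Real.exp (α * t) + α₂ / (2 * α) * s ^ 2 * Real.exp (2 * α * t) := by ring
    simp only [e]; ring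
  · intro j t
    have hid := dm_ibp j (α₁ / α) hb
    set Mj : ℝ := ∫ u in Set.Ioi (0:ℝ), u ^ j * Real.exp (α₁ / α * u + α₂ / (2 * α) * u ^ 2)
    set Mj1 : ℝ := ∫ u in Set.Ioi (0:ℝ), u ^ (j+1) * Real.exp (α₁ / α * u + α₂ / (2 * α) * u ^ 2)
    set Mj2 : ℝ := ∫ u in Set.Ioi (0:ℝ), u ^ (j+2) * Real.exp (α₁ / α * u + α₂ / (2 * α) * u ^ 2)
    have hid' : α * ((j:ℝ) + 1) * Mj + α₁ * Mj1 + α₂ * Mj2 = 0 := by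
      have hfs := hid
      field_simp at hfs
      have hαne : (2:ℝ) * α ≠ 0 := mul_ne_zero two_ne_zero hα
      apply mul_left_cancel₀ hαne
      rw [mul_zero]
      linear_combination 2 * α * hfs
    have hkey : α * (j : ℝ) * deformedMoment α α₁ α₂ j t
        + α₁ * deformedMoment α α₁ α₂ (j + 1) t
        + α₂ * deformedMoment α α₁ α₂ (j + 2) t
        = -α * deformedMoment α α₁ α₂ j t := by
      rw [dm_subst α α₁ α₂ j t, dm_subst α α₁ α₂ (j+1) t, dm_subst α α₁ α₂ (j+2) t]
      linear_combination (Real.exp (-(α * t))) * hid'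
    rw [hkey]
    exact hder3 j t
end

section
/- Let α, α₁, α₂ ∈ ℝ and let c_j : ℝ → ℝ (j ∈ ℕ) be differentiable moments such that all odd moments vanish (c_{2k+1}(t) = 0 for all k ∈ ℕ and t ∈ ℝ) and c_j'(t) = α j c_j(t) + α₁ c_{j+2}(t) + α₂ c_{j+4}(t) for all j and t, with Δ_n(t) ≠ 0 for all n ≥ 1 and all t. Then for every integer n ≥ 4, every t ∈ ℝ and every λ₀ ∈ ℝ, the function t ↦ P_n(λ₀e^{αt}; t) is differentiable and (d/dt) P_n(λ₀e^{αt}; t) = n α P_n(λ₀e^{αt}; t) − a_{n−1}²(t) a_n²(t)(α₁ + α₂(a_{n−2}²(t) + a_{n−1}²(t) + a_n²(t) + a_{n+1}²(t))) P_{n−2}(λ₀e^{αt}; t) − α₂ a_{n−3}²(t) a_{n−2}²(t) a_{n−1}²(t) a_n²(t) P_{n−4}(λ₀e^{αt}; t). -/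
/-- Hankel determinant `Δ_n(t) = det (c_{i+j}(t))_{0 ≤ i,j ≤ n-1}` (with `Δ_0 = 1`). -/
noncomputable def hankelDet (c : ℕ → ℝ → ℝ) (n : ℕ) (t : ℝ) : ℝ :=
  Matrix.det (Matrix.of fun i j : Fin n => c (i.1 + j.1) t)

/-- Recurrence coefficient `a_n²(t) = Δ_{n+1} Δ_{n-1} / Δ_n²`. -/
noncomputable def aSq (c : ℕ → ℝ → ℝ) (n : ℕ) (t : ℝ) : ℝ :=
  hankelDet c (n + 1) t * hankelDet c (n - 1) t / (hankelDet c n t) ^ 2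

/-- The monic orthogonal polynomial `P_n(λ; t)`: `Δ_n(t)⁻¹` times the determinant of the
`(n+1)×(n+1)` matrix whose `i`-th row (`0 ≤ i ≤ n-1`) is `(c_i, c_{i+1}, …, c_{i+n})` and
whose last row is `(1, λ, λ², …, λⁿ)`. -/
noncomputable def opoly (c : ℕ → ℝ → ℝ) (n : ℕ) (lam t : ℝ) : ℝ :=
  (hankelDet c n t)⁻¹ *
    Matrix.det (Matrix.of fun i j : Fin (n + 1) =>
      if i.1 = n then lam ^ j.1 else c (i.1 + j.1) t)


/-- coefficient of λ^j in P_n -/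
noncomputable def pc (c : ℕ → ℝ → ℝ) (n j : ℕ) (t : ℝ) : ℝ :=
  if h : j < n + 1 then
    (-1 : ℝ) ^ (n + j) * (hankelDet c n t)⁻¹ *
      Matrix.det (Matrix.of fun i k : Fin n =>
        c (i.1 + ((⟨j, h⟩ : Fin (n+1)).succAbove k).1) t)
  else 0

/-- generic last-row expansion -/
lemma lastrow_expand (c : ℕ → ℝ → ℝ) (n : ℕ) (t : ℝ) (v : ℕ → ℝ) :
    Matrix.det (Matrix.of fun i j : Fin (n + 1) =>
        if i.1 = n then v j.1 else c (i.1 + j.1) t)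
      = ∑ j : Fin (n+1), (-1 : ℝ) ^ (n + j.1) * v j.1 *
          Matrix.det (Matrix.of fun i k : Fin n =>
            c (i.1 + (Fin.succAbove j k).1) t) := by
  rw [Matrix.det_succ_row _ (Fin.last n)]
  apply Finset.sum_congr rfl
  intro j _
  congr 1
  · simp [Fin.last]
  · congr 1
    ext i k
    simp [Fin.succAbove, Matrix.submatrix, Fin.last, Fin.lt_iff_val_lt_val,
      (Fin.castSucc_lt_last i).ne]
    exact fun h => absurd h (by omega)

noncomputable def Sm (c : ℕ → ℝ → ℝ) (n m : ℕ) (t : ℝ) : ℝ :=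
  ∑ j ∈ Finset.range (n+1), pc c n j t * c (j + m) t

lemma opoly_eq_sum (c : ℕ → ℝ → ℝ) (n : ℕ) (lam t : ℝ) :
    opoly c n lam t = ∑ j ∈ Finset.range (n+1), pc c n j t * lam ^ j := by
  rw [opoly, lastrow_expand, Finset.mul_sum,
    ← Fin.sum_univ_eq_sum_range (fun j => pc c n j t * lam ^ j) (n+1)]
  apply Finset.sum_congr rfl
  intro j _
  rw [pc, dif_pos j.isLt]
  simp only [Fin.eta]
  ring

lemma Sm_eq (c : ℕ → ℝ → ℝ) (n m : ℕ) (t : ℝ) :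
    Sm c n m t = (hankelDet c n t)⁻¹ *
      Matrix.det (Matrix.of fun i j : Fin (n + 1) =>
        if i.1 = n then c (m + j.1) t else c (i.1 + j.1) t) := by
  rw [Sm, lastrow_expand c n t (fun k => c (m + k) t), Finset.mul_sum,
    ← Fin.sum_univ_eq_sum_range (fun j => pc c n j t * c (j + m) t) (n+1)]
  apply Finset.sum_congr rfl
  intro j _
  rw [pc, dif_pos j.isLt, add_comm m j.1]
  simp only [Fin.eta]
  ring

lemma Sm_lt (c : ℕ → ℝ → ℝ) (n m : ℕ) (h : m < n) (t : ℝ) : Sm c n m t = 0 := by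
  rw [Sm_eq]
  have hrow : (Matrix.of fun i j : Fin (n + 1) =>
      if i.1 = n then c (m + j.1) t else c (i.1 + j.1) t) (⟨m, by omega⟩ : Fin (n+1))
      = (Matrix.of fun i j : Fin (n + 1) =>
      if i.1 = n then c (m + j.1) t else c (i.1 + j.1) t) (Fin.last n) := by
    funext k
    simp [Fin.last, Nat.ne_of_lt h]
  rw [Matrix.det_zero_of_row_eq (i_ne_j := by simp [Fin.ext_iff, Fin.last]; omega) hrow,
    mul_zero]

lemma Sm_n (c : ℕ → ℝ → ℝ) (n : ℕ) (t : ℝ) :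
    Sm c n n t = hankelDet c (n+1) t * (hankelDet c n t)⁻¹ := by
  have hB : (Matrix.of fun i j : Fin (n + 1) =>
      if i.1 = n then c (n + j.1) t else c (i.1 + j.1) t)
      = Matrix.of fun i j : Fin (n+1) => c (i.1 + j.1) t := by
    ext i j
    by_cases h : i.1 = n <;> simp [h]
  rw [Sm_eq, hB, mul_comm, hankelDet]
  rfl

lemma codd (c : ℕ → ℝ → ℝ) (hodd : ∀ (k : ℕ) (t : ℝ), c (2 * k + 1) t = 0)
    {m : ℕ} (hm : m % 2 = 1) (t : ℝ) : c m t = 0 := by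
  have : m = 2 * (m / 2) + 1 := by omega
  rw [this]; exact hodd _ t

lemma pc_parity (c : ℕ → ℝ → ℝ) (hodd : ∀ (k : ℕ) (t : ℝ), c (2 * k + 1) t = 0)
    (n j : ℕ) (hp : (n + j) % 2 = 1) (t : ℝ) : pc c n j t = 0 := by
  rw [pc]
  split
  case isFalse => rfl
  case isTrue h =>
    set M : Matrix (Fin n) (Fin n) ℝ := Matrix.of fun i k : Fin n =>
      c (i.1 + ((⟨j, h⟩ : Fin (n+1)).succAbove k).1) t with hMdef
    suffices hdet : M.det = 0 by rw [hdet, mul_zero]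
    set s : Fin n → ℕ := fun k => ((⟨j, h⟩ : Fin (n+1)).succAbove k).1 with hs
    have hM : M = Matrix.diagonal (fun i : Fin n => (-1:ℝ)^(i.1)) * M *
        Matrix.diagonal (fun k : Fin n => (-1:ℝ)^(s k)) := by
      ext i k
      rw [Matrix.mul_diagonal, Matrix.diagonal_mul]
      show M i k = (-1:ℝ)^(i.1) * M i k * (-1)^(s k)
      rcases Nat.even_or_odd (i.1 + s k) with he | ho
      · have : (-1:ℝ)^(i.1) * (-1)^(s k) = 1 := by
          rw [← pow_add]; exact Even.neg_one_pow he
        calc M i k = ((-1:ℝ)^(i.1) * (-1)^(s k)) * M i k := by rw [this, one_mul]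
        _ = _ := by ring
      · have hz : M i k = 0 := by
          show c (i.1 + s k) t = 0
          exact codd c hodd (Nat.odd_iff.mp ho) t
        rw [hz]; ring
    have hdet2 : M.det = (-1:ℝ)^(∑ i : Fin n, i.1) * M.det * (-1)^(∑ k : Fin n, s k) := by
      conv_lhs => rw [hM]
      rw [Matrix.det_mul, Matrix.det_mul, Matrix.det_diagonal, Matrix.det_diagonal,
        Finset.prod_pow_eq_pow_sum, Finset.prod_pow_eq_pow_sum]
    have hsum : j + ∑ k : Fin n, s k = ∑ l : Fin (n+1), l.1 := by
      rw [Fin.sum_univ_succAbove (fun l : Fin (n+1) => l.1) ⟨j, h⟩]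
    have hsum2 : ∑ l : Fin (n+1), l.1 = (∑ i : Fin n, i.1) + n := by
      rw [Fin.sum_univ_castSucc]
      simp
    have hE : ((∑ i : Fin n, i.1) + ∑ k : Fin n, s k) % 2 = 1 := by omega
    have hneg : (-1:ℝ)^(∑ i : Fin n, i.1) * (-1)^(∑ k : Fin n, s k) = -1 := by
      rw [← pow_add]; exact Odd.neg_one_pow (Nat.odd_iff.mpr hE)
    linear_combination (1/2:ℝ) * hdet2 + (1/2:ℝ) * M.det * hneg

lemma pc_top (c : ℕ → ℝ → ℝ) (n j : ℕ) (hj : n < j) (t : ℝ) : pc c n j t = 0 := by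
  rw [pc, dif_neg (by omega)]

lemma pc_lead (c : ℕ → ℝ → ℝ) (n : ℕ) (t : ℝ) (hn : hankelDet c n t ≠ 0) :
    pc c n n t = 1 := by
  rw [pc, dif_pos (by omega : n < n + 1)]
  have h1 : ((-1:ℝ))^(n+n) = 1 := Even.neg_one_pow ⟨n, rfl⟩
  have h2 : (Matrix.of fun i k : Fin n =>
      c (i.1 + ((⟨n, by omega⟩ : Fin (n+1)).succAbove k).1) t) =
      Matrix.of fun i k : Fin n => c (i.1 + k.1) t := by
    ext i k
    have : ((⟨n, by omega⟩ : Fin (n+1)).succAbove k).1 = k.1 := by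
      rw [Fin.succAbove]
      simp [Fin.lt_iff_val_lt_val, k.isLt]
    simp only [Matrix.of_apply]
    rw [this]
  rw [h1, h2, one_mul]
  exact inv_mul_cancel₀ hn

lemma Sm_parity (c : ℕ → ℝ → ℝ) (hodd : ∀ (k : ℕ) (t : ℝ), c (2 * k + 1) t = 0)
    (n m : ℕ) (hp : (n + m) % 2 = 1) (t : ℝ) : Sm c n m t = 0 := by
  rw [Sm]
  apply Finset.sum_eq_zero
  intro j _
  rcases Nat.even_or_odd (n + j) with he | ho
  · have : (j + m) % 2 = 1 := by
      rcases Nat.even_iff.mp he with h2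
      omega
    rw [codd c hodd this t, mul_zero]
  · rw [pc_parity c hodd n j (Nat.odd_iff.mp ho) t, zero_mul]

lemma vanish (c : ℕ → ℝ → ℝ) (n : ℕ) (t : ℝ) (hn : hankelDet c n t ≠ 0)
    (r : ℕ → ℝ) (hr : ∀ m, m < n → ∑ j ∈ Finset.range n, r j * c (j + m) t = 0) :
    ∀ j, j < n → r j = 0 := by
  set H : Matrix (Fin n) (Fin n) ℝ := Matrix.of fun i j : Fin n => c (i.1 + j.1) t with hH
  have hdet : IsUnit H.det := by
    rw [isUnit_iff_ne_zero]; exact hn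
  set v : Fin n → ℝ := fun j => r j.1 with hv
  have hmv : H.mulVec v = 0 := by
    funext m
    rw [Matrix.mulVec]
    show ∑ j : Fin n, H m j * v j = 0
    rw [← hr m.1 m.isLt, ← Fin.sum_univ_eq_sum_range (fun j => r j * c (j + m.1) t) n]
    apply Finset.sum_congr rfl
    intro j _
    show c (m.1 + j.1) t * r j.1 = _
    rw [add_comm m.1 j.1]; ring
  have hv0 : v = 0 := by
    have := congrArg (fun w => H⁻¹.mulVec w) hmv
    simpa [Matrix.mulVec_mulVec, Matrix.nonsing_inv_mul H hdet] using this
  intro j hj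
  have := congrFun hv0 ⟨j, hj⟩
  simpa using this

lemma diff_det {m : ℕ} (f : Fin m → Fin m → ℝ → ℝ) (t : ℝ)
    (hf : ∀ i j, DifferentiableAt ℝ (f i j) t) :
    DifferentiableAt ℝ (fun s => Matrix.det (Matrix.of fun i j => f i j s)) t := by
  have heq : (fun s => Matrix.det (Matrix.of fun i j => f i j s)) =
      fun s => ∑ σ : Equiv.Perm (Fin m), ((Equiv.Perm.sign σ : ℤ) : ℝ) * ∏ i, f (σ i) i s := by
    funext s
    rw [Matrix.det_apply']
    apply Finset.sum_congr rfl
    intro σ _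
    rfl
  rw [heq]
  apply DifferentiableAt.fun_sum
  intro σ _
  apply DifferentiableAt.const_mul
  exact DifferentiableAt.fun_finsetProd (fun i _ => hf (σ i) i)

section main
variable (α α₁ α₂ : ℝ) (c : ℕ → ℝ → ℝ)
variable (hc : ∀ (j : ℕ) (t : ℝ), HasDerivAt (fun s => c j s)
      (α * j * c j t + α₁ * c (j + 2) t + α₂ * c (j + 4) t) t)

include hc in
lemma diff_hankel (n : ℕ) (t : ℝ) : DifferentiableAt ℝ (fun s => hankelDet c n s) t := by
  have : (fun s => hankelDet c n s) =
      fun s => Matrix.det (Matrix.of fun i j : Fin n => c (i.1 + j.1) s) := rfl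
  rw [this]
  exact diff_det _ t (fun i j => (hc _ t).differentiableAt)

include hc in
lemma diff_pc (n j : ℕ) (t : ℝ) (hn : hankelDet c n t ≠ 0) :
    DifferentiableAt ℝ (fun s => pc c n j s) t := by
  by_cases h : j < n + 1
  · have heq : (fun s => pc c n j s) = fun s =>
        (-1 : ℝ) ^ (n + j) * (hankelDet c n s)⁻¹ *
          Matrix.det (Matrix.of fun i k : Fin n =>
            c (i.1 + ((⟨j, h⟩ : Fin (n+1)).succAbove k).1) s) := by
      funext s
      rw [pc, dif_pos h]
    rw [heq]
    exact (((diff_hankel α α₁ α₂ c hc n t).inv hn).const_mul _).mul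
      (diff_det _ t (fun i k => (hc _ t).differentiableAt))
  · have heq : (fun s => pc c n j s) = fun _ => (0:ℝ) := by
      funext s; rw [pc, dif_neg h]
    rw [heq]
    exact differentiableAt_const 0
end main

section main2
variable (c : ℕ → ℝ → ℝ)
variable (hodd : ∀ (k : ℕ) (t : ℝ), c (2 * k + 1) t = 0)
variable (hΔ : ∀ n : ℕ, 1 ≤ n → ∀ t : ℝ, hankelDet c n t ≠ 0)

include hΔ in
lemma hΔ' (n : ℕ) (t : ℝ) : hankelDet c n t ≠ 0 := by
  rcases Nat.eq_zero_or_pos n with h | h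
  · subst h
    rw [hankelDet, Matrix.det_fin_zero]
    exact one_ne_zero
  · exact hΔ n h t

include hodd hΔ in
lemma hTm (k : ℕ) (m : ℕ) (hm : m < k + 2) (t : ℝ) :
    Sm c (k+2) m t + aSq c (k+1) t * Sm c k m t - Sm c (k+1) (m+1) t = 0 := by
  rcases lt_trichotomy m k with h | h | h
  · rw [Sm_lt c _ _ (by omega) t, Sm_lt c _ _ (by omega) t, Sm_lt c _ _ (by omega) t]
    ring
  · subst h
    rw [Sm_lt c _ _ (by omega) t, Sm_n, Sm_n]
    have h1 := hΔ' c hΔ m t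
    have h2 := hΔ (m+1) (by omega) t
    have h3 := hΔ (m+2) (by omega) t
    rw [aSq]
    simp only [Nat.add_sub_cancel]
    field_simp
    ring
  · have hm' : m = k + 1 := by omega
    subst hm'
    rw [Sm_lt c _ _ (by omega) t, Sm_parity c hodd _ _ (by omega) t,
      Sm_parity c hodd _ _ (by omega) t]
    ring

include hodd hΔ in
lemma rec_coeff (k : ℕ) (t : ℝ) : ∀ j,
    pc c (k+2) j t + aSq c (k+1) t * pc c k j t
      = (if j = 0 then 0 else pc c (k+1) (j-1) t) := by
  set r : ℕ → ℝ := fun j => pc c (k+2) j t + aSq c (k+1) t * pc c k j t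
      - (if j = 0 then 0 else pc c (k+1) (j-1) t) with hr
  have htop : ∀ j, k + 2 ≤ j → r j = 0 := by
    intro j hj
    rcases Nat.eq_or_lt_of_le hj with h | h
    · subst h
      simp only [hr]
      rw [pc_lead c _ _ (hΔ (k+2) (by omega) t), pc_top c _ _ (by omega) t,
        if_neg (by omega)]
      have : k + 2 - 1 = k + 1 := by omega
      rw [this, pc_lead c _ _ (hΔ (k+1) (by omega) t)]
      ring
    · simp only [hr]
      rw [pc_top c _ _ (by omega) t, pc_top c _ _ (by omega) t, if_neg (by omega),
        pc_top c _ _ (by omega) t]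
      ring
  have hsum : ∀ m, m < k + 2 → ∑ j ∈ Finset.range (k+2), r j * c (j + m) t = 0 := by
    intro m hm
    have hfull : ∑ j ∈ Finset.range (k+3), r j * c (j + m) t
        = Sm c (k+2) m t + aSq c (k+1) t * Sm c k m t - Sm c (k+1) (m+1) t := by
      have e1 : ∑ j ∈ Finset.range (k+3), pc c (k+2) j t * c (j + m) t = Sm c (k+2) m t := rfl
      have e2 : ∑ j ∈ Finset.range (k+3), pc c k j t * c (j + m) t = Sm c k m t := by
        rw [Sm]
        rw [Finset.sum_range_succ, Finset.sum_range_succ,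
          pc_top c _ _ (by omega) t, pc_top c _ _ (by omega) t]
        ring
      have e3 : ∑ j ∈ Finset.range (k+3), (if j = 0 then 0 else pc c (k+1) (j-1) t) * c (j + m) t
          = Sm c (k+1) (m+1) t := by
        rw [Finset.sum_range_succ']
        rw [show (if (0:ℕ) = 0 then (0:ℝ) else pc c (k+1) (0-1) t) = 0 from if_pos rfl,
          zero_mul, add_zero, Sm]
        apply Finset.sum_congr rfl
        intro j _
        rw [if_neg (Nat.succ_ne_zero j)]
        congr 2
        omega
      calc ∑ j ∈ Finset.range (k+3), r j * c (j + m) t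
          = ∑ j ∈ Finset.range (k+3), (pc c (k+2) j t * c (j + m) t
            + aSq c (k+1) t * (pc c k j t * c (j + m) t)
            - (if j = 0 then 0 else pc c (k+1) (j-1) t) * c (j + m) t) := by
            apply Finset.sum_congr rfl; intro j _; simp only [hr]; ring
        _ = _ := by
            rw [Finset.sum_sub_distrib, Finset.sum_add_distrib, ← Finset.mul_sum, e1, e2, e3]
    have := hTm c hodd hΔ k m hm t
    rw [← hfull] at this
    rw [Finset.sum_range_succ] at this
    rw [htop (k+2) le_rfl, zero_mul, add_zero] at this
    exact this
  intro j
  rcases Nat.lt_or_ge j (k+2) with h | h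
  · have := vanish c (k+2) t (hΔ (k+2) (by omega) t) r hsum j h
    simp only [hr] at this
    linarith [this]
  · have := htop j h
    simp only [hr] at this
    linarith [this]

include hodd hΔ in
lemma Sshift (k m : ℕ) (t : ℝ) :
    Sm c (k+1) (m+1) t = Sm c (k+2) m t + aSq c (k+1) t * Sm c k m t := by
  have e3 : ∑ j ∈ Finset.range (k+3), (if j = 0 then 0 else pc c (k+1) (j-1) t) * c (j + m) t
      = Sm c (k+1) (m+1) t := by
    rw [Finset.sum_range_succ']
    rw [show (if (0:ℕ) = 0 then (0:ℝ) else pc c (k+1) (0-1) t) = 0 from if_pos rfl,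
      zero_mul, add_zero, Sm]
    apply Finset.sum_congr rfl
    intro j _
    rw [if_neg (Nat.succ_ne_zero j)]
    congr 2
    omega
  rw [← e3]
  have e2 : ∑ j ∈ Finset.range (k+3), pc c k j t * c (j + m) t = Sm c k m t := by
    rw [Sm, Finset.sum_range_succ, Finset.sum_range_succ,
      pc_top c _ _ (by omega) t, pc_top c _ _ (by omega) t]
    ring
  have e1 : ∑ j ∈ Finset.range (k+3), pc c (k+2) j t * c (j + m) t = Sm c (k+2) m t := rfl
  rw [← e1, ← e2, Finset.mul_sum, ← Finset.sum_add_distrib]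
  apply Finset.sum_congr rfl
  intro j _
  rw [← rec_coeff c hodd hΔ k t j]
  ring
end main2

noncomputable def dcoef (c : ℕ → ℝ → ℝ) (n j : ℕ) (t : ℝ) : ℝ :=
  deriv (fun s => pc c n j s) t

section main3
variable (α α₁ α₂ : ℝ) (c : ℕ → ℝ → ℝ)
variable (hodd : ∀ (k : ℕ) (t : ℝ), c (2 * k + 1) t = 0)
variable (hc : ∀ (j : ℕ) (t : ℝ), HasDerivAt (fun s => c j s)
      (α * j * c j t + α₁ * c (j + 2) t + α₂ * c (j + 4) t) t)
variable (hΔ : ∀ n : ℕ, 1 ≤ n → ∀ t : ℝ, hankelDet c n t ≠ 0)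

include hc hΔ in
lemma hasDerivAt_pc (n j : ℕ) (t : ℝ) :
    HasDerivAt (fun s => pc c n j s) (dcoef c n j t) t :=
  (diff_pc α α₁ α₂ c hc n j t (hΔ' c hΔ n t)).hasDerivAt

lemma dcoef_top (n j : ℕ) (hj : n < j) (t : ℝ) : dcoef c n j t = 0 := by
  rw [dcoef]
  have : (fun s => pc c n j s) = fun _ => (0:ℝ) := by
    funext s; exact pc_top c n j hj s
  rw [this, deriv_const]

include hΔ in
lemma dcoef_lead (n : ℕ) (t : ℝ) : dcoef c n n t = 0 := by
  rw [dcoef]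
  have : (fun s => pc c n n s) = fun _ => (1:ℝ) := by
    funext s; exact pc_lead c n s (hΔ' c hΔ n s)
  rw [this, deriv_const]

include hc hΔ in
lemma deriv_ortho (n m : ℕ) (hm : m < n) (t : ℝ) :
    ∑ j ∈ Finset.range (n+1), dcoef c n j t * c (j + m) t
      = - ∑ j ∈ Finset.range (n+1), pc c n j t *
          (α * (j + m : ℕ) * c (j + m) t + α₁ * c (j + m + 2) t + α₂ * c (j + m + 4) t) := by
  have hder : HasDerivAt (fun s => Sm c n m s)
      (∑ j ∈ Finset.range (n+1), (dcoef c n j t * c (j + m) t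
        + pc c n j t * (α * (j + m : ℕ) * c (j + m) t + α₁ * c (j + m + 2) t
          + α₂ * c (j + m + 4) t))) t := by
    apply HasDerivAt.fun_sum
    intro j _
    exact (hasDerivAt_pc α α₁ α₂ c hc hΔ n j t).mul (hc (j + m) t)
  have hzero : (fun s => Sm c n m s) = fun _ => (0:ℝ) := by
    funext s; exact Sm_lt c n m hm s
  rw [hzero] at hder
  have h0 := hder.unique (hasDerivAt_const t 0)
  rw [Finset.sum_add_distrib] at h0
  linarith [h0]
end main3

lemma Sm_ext (c : ℕ → ℝ → ℝ) (n m N : ℕ) (h : n ≤ N) (t : ℝ) :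
    ∑ j ∈ Finset.range (N+1), pc c n j t * c (j+m) t = Sm c n m t := by
  rw [Sm]
  symm
  apply Finset.sum_subset (Finset.range_subset_range.mpr (by omega))
  intro x _ hx
  rw [Finset.mem_range, not_lt] at hx
  rw [pc_top c n x (by omega) t, zero_mul]

lemma aSq_succ (c : ℕ → ℝ → ℝ) (k : ℕ) (t : ℝ) :
    aSq c (k+1) t = hankelDet c (k+2) t * hankelDet c k t / (hankelDet c (k+1) t)^2 := by
  rw [aSq]
  norm_num

section main4
variable (α α₁ α₂ : ℝ) (c : ℕ → ℝ → ℝ)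
variable (hodd : ∀ (k : ℕ) (t : ℝ), c (2 * k + 1) t = 0)
variable (hc : ∀ (j : ℕ) (t : ℝ), HasDerivAt (fun s => c j s)
      (α * j * c j t + α₁ * c (j + 2) t + α₂ * c (j + 4) t) t)
variable (hΔ : ∀ n : ℕ, 1 ≤ n → ∀ t : ℝ, hankelDet c n t ≠ 0)

include hodd hc hΔ in
lemma coeff_identity (k : ℕ) (t : ℝ) :
    ∀ j, dcoef c (k+4) j t + α * j * pc c (k+4) j t
      - ((k:ℝ)+4) * α * pc c (k+4) j t
      + (aSq c (k+3) t * aSq c (k+4) t * (α₁ + α₂ * (aSq c (k+2) t + aSq c (k+3) t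
          + aSq c (k+4) t + aSq c (k+5) t))) * pc c (k+2) j t
      + (α₂ * aSq c (k+1) t * aSq c (k+2) t * aSq c (k+3) t * aSq c (k+4) t) * pc c k j t
      = 0 := by
  set C2 : ℝ := aSq c (k+3) t * aSq c (k+4) t * (α₁ + α₂ * (aSq c (k+2) t + aSq c (k+3) t
      + aSq c (k+4) t + aSq c (k+5) t)) with hC2
  set C4 : ℝ := α₂ * aSq c (k+1) t * aSq c (k+2) t * aSq c (k+3) t * aSq c (k+4) t with hC4
  set r : ℕ → ℝ := fun j => dcoef c (k+4) j t + α * j * pc c (k+4) j t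
      - ((k:ℝ)+4) * α * pc c (k+4) j t + C2 * pc c (k+2) j t + C4 * pc c k j t with hr
  have htop : ∀ j, k + 4 ≤ j → r j = 0 := by
    intro j hj
    rcases Nat.eq_or_lt_of_le hj with h | h
    · subst h
      simp only [hr]
      rw [dcoef_lead c hΔ, pc_lead c _ _ (hΔ (k+4) (by omega) t),
        pc_top c _ _ (by omega) t, pc_top c _ _ (by omega) t]
      push_cast
      ring
    · simp only [hr]
      rw [dcoef_top c _ _ (by omega) t, pc_top c _ _ (by omega) t,
        pc_top c _ _ (by omega) t, pc_top c _ _ (by omega) t]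
      ring
  -- the key evaluation of the moment sums
  have key : ∀ m, m < k + 4 → ∑ j ∈ Finset.range (k+5), r j * c (j+m) t
      = - (α * m * Sm c (k+4) m t) - α₁ * Sm c (k+4) (m+2) t - α₂ * Sm c (k+4) (m+4) t
        - ((k:ℝ)+4) * α * Sm c (k+4) m t + C2 * Sm c (k+2) m t + C4 * Sm c k m t := by
    intro m hm
    have hdc := deriv_ortho α α₁ α₂ c hc hΔ (k+4) m hm t
    norm_num only at hdc
    have e2 : ∑ j ∈ Finset.range (k+5), pc c (k+4) j t * c (j+(m+2)) t
        = Sm c (k+4) (m+2) t := Sm_ext c (k+4) (m+2) (k+4) le_rfl t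
    have e4 : ∑ j ∈ Finset.range (k+5), pc c (k+4) j t * c (j+(m+4)) t
        = Sm c (k+4) (m+4) t := Sm_ext c (k+4) (m+4) (k+4) le_rfl t
    have e0 : ∑ j ∈ Finset.range (k+5), pc c (k+4) j t * c (j+m) t
        = Sm c (k+4) m t := Sm_ext c (k+4) m (k+4) le_rfl t
    have eB : ∑ j ∈ Finset.range (k+5), pc c (k+2) j t * c (j+m) t
        = Sm c (k+2) m t := Sm_ext c (k+2) m (k+4) (by omega) t
    have eC : ∑ j ∈ Finset.range (k+5), pc c k j t * c (j+m) t
        = Sm c k m t := Sm_ext c k m (k+4) (by omega) t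
    have hterm : ∀ j, pc c (k+4) j t * (α * ((j:ℕ)+m : ℕ) * c (j + m) t
        + α₁ * c (j + m + 2) t + α₂ * c (j + m + 4) t)
        = α * ((j:ℝ) * pc c (k+4) j t * c (j+m) t)
          + α * m * (pc c (k+4) j t * c (j+m) t)
          + α₁ * (pc c (k+4) j t * c (j+(m+2)) t)
          + α₂ * (pc c (k+4) j t * c (j+(m+4)) t) := by
      intro j
      have h2 : j + m + 2 = j + (m + 2) := by omega
      have h4 : j + m + 4 = j + (m + 4) := by omega
      rw [h2, h4]
      push_cast
      ring
    have hdc2 : ∑ j ∈ Finset.range (k+5), dcoef c (k+4) j t * c (j+m) t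
        = - (α * (∑ j ∈ Finset.range (k+5), (j:ℝ) * pc c (k+4) j t * c (j+m) t))
          - α * m * Sm c (k+4) m t - α₁ * Sm c (k+4) (m+2) t - α₂ * Sm c (k+4) (m+4) t := by
      rw [hdc, Finset.sum_congr rfl (fun j _ => hterm j),
        Finset.sum_add_distrib, Finset.sum_add_distrib, Finset.sum_add_distrib,
        ← Finset.mul_sum, ← Finset.mul_sum, ← Finset.mul_sum, ← Finset.mul_sum,
        e2, e4, e0]
      ring
    have hterm2 : ∀ j, r j * c (j+m) t
        = dcoef c (k+4) j t * c (j+m) t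
          + α * ((j:ℝ) * pc c (k+4) j t * c (j+m) t)
          - ((k:ℝ)+4) * α * (pc c (k+4) j t * c (j+m) t)
          + C2 * (pc c (k+2) j t * c (j+m) t)
          + C4 * (pc c k j t * c (j+m) t) := by
      intro j
      simp only [hr]
      ring
    rw [Finset.sum_congr rfl (fun j _ => hterm2 j),
      Finset.sum_add_distrib, Finset.sum_add_distrib, Finset.sum_sub_distrib,
      Finset.sum_add_distrib,
      ← Finset.mul_sum, ← Finset.mul_sum, ← Finset.mul_sum, ← Finset.mul_sum,
      hdc2, e0, eB, eC]
    ring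
  have hzero : ∀ m, m < k + 4 → ∑ j ∈ Finset.range (k+5), r j * c (j+m) t = 0 := by
    intro m hm
    rw [key m hm]
    rcases lt_trichotomy m k with h | h | h
    · rw [Sm_lt c (k+4) m (by omega) t, Sm_lt c (k+4) (m+2) (by omega) t,
        Sm_lt c (k+4) (m+4) (by omega) t, Sm_lt c (k+2) m (by omega) t,
        Sm_lt c k m (by omega) t]
      ring
    · subst h
      rw [Sm_lt c (m+4) m (by omega) t, Sm_lt c (m+4) (m+2) (by omega) t,
        Sm_lt c (m+2) m (by omega) t, Sm_n c (m+4) t, Sm_n c m t]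
      simp only [hC4]
      have a1 := aSq_succ c m t
      have a2 := aSq_succ c (m+1) t
      have a3 := aSq_succ c (m+2) t
      have a4 := aSq_succ c (m+3) t
      norm_num only at a1 a2 a3 a4 ⊢
      rw [a1, a2, a3, a4]
      have d0 := hΔ' c hΔ m t
      have d1 := hΔ' c hΔ (m+1) t
      have d2 := hΔ' c hΔ (m+2) t
      have d3 := hΔ' c hΔ (m+3) t
      have d4 := hΔ' c hΔ (m+4) t
      have d5 := hΔ' c hΔ (m+5) t
      field_simp
      ring
    · have h3 : m = k+1 ∨ m = k+2 ∨ m = k+3 := by omega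
      rcases h3 with h | h | h
      · subst h
        rw [Sm_lt c (k+4) (k+1) (by omega) t, Sm_lt c (k+4) (k+1+2) (by omega) t,
          Sm_parity c hodd (k+4) (k+1+4) (by omega) t,
          Sm_lt c (k+2) (k+1) (by omega) t,
          Sm_parity c hodd k (k+1) (by omega) t]
        ring
      · subst h
        rw [Sm_lt c (k+4) (k+2) (by omega) t]
        have h1 := Sshift c hodd hΔ (k+3) (k+5) t
        have h2 := Sshift c hodd hΔ (k+2) (k+4) t
        have h3 := Sshift c hodd hΔ (k+1) (k+3) t
        have h4 := Sshift c hodd hΔ k (k+2) t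
        norm_num only at h1 h2 h3 h4 ⊢
        rw [h1, h2, h3, h4, Sm_n c (k+5) t, Sm_n c (k+4) t, Sm_n c (k+3) t, Sm_n c (k+2) t]
        simp only [hC2, hC4]
        have a1 := aSq_succ c k t
        have a2 := aSq_succ c (k+1) t
        have a3 := aSq_succ c (k+2) t
        have a4 := aSq_succ c (k+3) t
        have a5 := aSq_succ c (k+4) t
        norm_num only at a1 a2 a3 a4 a5
        rw [a1, a2, a3, a4, a5]
        have d0 := hΔ' c hΔ k t
        have d1 := hΔ' c hΔ (k+1) t
        have d2 := hΔ' c hΔ (k+2) t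
        have d3 := hΔ' c hΔ (k+3) t
        have d4 := hΔ' c hΔ (k+4) t
        have d5 := hΔ' c hΔ (k+5) t
        have d6 := hΔ' c hΔ (k+6) t
        field_simp
        ring
      · subst h
        rw [Sm_lt c (k+4) (k+3) (by omega) t,
          Sm_parity c hodd (k+4) (k+3+2) (by omega) t,
          Sm_parity c hodd (k+4) (k+3+4) (by omega) t,
          Sm_parity c hodd (k+2) (k+3) (by omega) t,
          Sm_parity c hodd k (k+3) (by omega) t]
        ring
  have hsum' : ∀ m, m < k+4 → ∑ j ∈ Finset.range (k+4), r j * c (j+m) t = 0 := by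
    intro m hm
    have := hzero m hm
    rw [Finset.sum_range_succ, htop (k+4) le_rfl, zero_mul, add_zero] at this
    exact this
  have hvan := vanish c (k+4) t (hΔ (k+4) (by omega) t) r hsum'
  intro j
  rcases Nat.lt_or_ge j (k+4) with h | h
  · have := hvan j h
    simpa only [hr] using this
  · have := htop j h
    simpa only [hr] using this
end main4

lemma pow_split (lam₀ α t : ℝ) (j : ℕ) :
    (lam₀ * Real.exp (α * t)) ^ j = lam₀ ^ j * Real.exp ((j:ℝ) * α * t) := by
  rw [mul_pow, ← Real.exp_nat_mul, mul_assoc]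

lemma opoly_ext (c : ℕ → ℝ → ℝ) (n N : ℕ) (h : n ≤ N) (lam₀ α t : ℝ) :
    ∑ j ∈ Finset.range (N+1), pc c n j t * (lam₀ ^ j * Real.exp ((j:ℝ) * α * t))
      = opoly c n (lam₀ * Real.exp (α * t)) t := by
  rw [opoly_eq_sum]
  have : ∀ j ∈ Finset.range (n+1), pc c n j t * (lam₀ * Real.exp (α * t)) ^ j
      = pc c n j t * (lam₀ ^ j * Real.exp ((j:ℝ) * α * t)) := by
    intro j _
    rw [pow_split]
  rw [Finset.sum_congr rfl this]
  symm
  apply Finset.sum_subset (Finset.range_subset_range.mpr (by omega))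
  intro x _ hx
  rw [Finset.mem_range, not_lt] at hx
  rw [pc_top c n x (by omega) t, zero_mul]

/-- Time evolution of the monic OPs with symmetric measure under the nonisospectral
deformation (the nonisospectral Lotka–Volterra flow). -/
theorem opoly_nonisospectral_evolution_symmetric
    (α α₁ α₂ : ℝ) (c : ℕ → ℝ → ℝ)
    (hodd : ∀ (k : ℕ) (t : ℝ), c (2 * k + 1) t = 0)
    (hc : ∀ (j : ℕ) (t : ℝ), HasDerivAt (fun s => c j s)
      (α * j * c j t + α₁ * c (j + 2) t + α₂ * c (j + 4) t) t)
    (hΔ : ∀ n : ℕ, 1 ≤ n → ∀ t : ℝ, hankelDet c n t ≠ 0) :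
    ∀ n : ℕ, 4 ≤ n → ∀ (t lam₀ : ℝ),
      HasDerivAt (fun s => opoly c n (lam₀ * Real.exp (α * s)) s)
        ((n : ℝ) * α * opoly c n (lam₀ * Real.exp (α * t)) t
          - aSq c (n - 1) t * aSq c n t *
              (α₁ + α₂ * (aSq c (n - 2) t + aSq c (n - 1) t + aSq c n t + aSq c (n + 1) t)) *
              opoly c (n - 2) (lam₀ * Real.exp (α * t)) t
          - α₂ * aSq c (n - 3) t * aSq c (n - 2) t * aSq c (n - 1) t * aSq c n t *
              opoly c (n - 4) (lam₀ * Real.exp (α * t)) t) t := by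
  intro n hn t lam₀
  obtain ⟨k, rfl⟩ : ∃ k, n = k + 4 := ⟨n - 4, by omega⟩
  have s1 : k + 4 - 1 = k + 3 := by omega
  have s2 : k + 4 - 2 = k + 2 := by omega
  have s3 : k + 4 - 3 = k + 1 := by omega
  have s4 : k + 4 - 4 = k := by omega
  rw [s1, s2, s3, s4]
  -- rewrite the function as a finite sum
  have hfun : (fun s => opoly c (k+4) (lam₀ * Real.exp (α * s)) s)
      = fun s => ∑ j ∈ Finset.range (k+5), pc c (k+4) j s
          * (lam₀ ^ j * Real.exp ((j:ℝ) * α * s)) := by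
    funext s
    rw [opoly_eq_sum]
    have h45 : k + 4 + 1 = k + 5 := by omega
    rw [h45]
    apply Finset.sum_congr rfl
    intro j _
    rw [pow_split]
  rw [hfun]
  have hexp : ∀ j : ℕ, HasDerivAt (fun s => lam₀ ^ j * Real.exp ((j:ℝ) * α * s))
      (lam₀ ^ j * (Real.exp ((j:ℝ) * α * t) * ((j:ℝ) * α))) t := by
    intro j
    have hb : HasDerivAt (fun s : ℝ => (j:ℝ) * α * s) ((j:ℝ) * α) t := by
      simpa using (hasDerivAt_id t).const_mul ((j:ℝ) * α)
    exact hb.exp.const_mul (lam₀ ^ j)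
  have hder : HasDerivAt (fun s => ∑ j ∈ Finset.range (k+5), pc c (k+4) j s
        * (lam₀ ^ j * Real.exp ((j:ℝ) * α * s)))
      (∑ j ∈ Finset.range (k+5),
        (dcoef c (k+4) j t * (lam₀ ^ j * Real.exp ((j:ℝ) * α * t))
          + pc c (k+4) j t * (lam₀ ^ j * (Real.exp ((j:ℝ) * α * t) * ((j:ℝ) * α))))) t := by
    apply HasDerivAt.fun_sum
    intro j _
    exact (hasDerivAt_pc α α₁ α₂ c hc hΔ (k+4) j t).mul (hexp j)
  have hval : ∑ j ∈ Finset.range (k+5),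
        (dcoef c (k+4) j t * (lam₀ ^ j * Real.exp ((j:ℝ) * α * t))
          + pc c (k+4) j t * (lam₀ ^ j * (Real.exp ((j:ℝ) * α * t) * ((j:ℝ) * α))))
      = ((k+4 : ℕ) : ℝ) * α * opoly c (k+4) (lam₀ * Real.exp (α * t)) t
          - aSq c (k+3) t * aSq c (k+4) t *
              (α₁ + α₂ * (aSq c (k+2) t + aSq c (k+3) t + aSq c (k+4) t + aSq c (k+5) t)) *
              opoly c (k+2) (lam₀ * Real.exp (α * t)) t
          - α₂ * aSq c (k+1) t * aSq c (k+2) t * aSq c (k+3) t * aSq c (k+4) t *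
              opoly c k (lam₀ * Real.exp (α * t)) t := by
    have hcoef := coeff_identity α α₁ α₂ c hodd hc hΔ k t
    have step1 : ∀ j ∈ Finset.range (k+5),
        dcoef c (k+4) j t * (lam₀ ^ j * Real.exp ((j:ℝ) * α * t))
          + pc c (k+4) j t * (lam₀ ^ j * (Real.exp ((j:ℝ) * α * t) * ((j:ℝ) * α)))
        = ((k:ℝ)+4) * α * (pc c (k+4) j t * (lam₀ ^ j * Real.exp ((j:ℝ) * α * t)))
          - (aSq c (k+3) t * aSq c (k+4) t * (α₁ + α₂ * (aSq c (k+2) t + aSq c (k+3) t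
              + aSq c (k+4) t + aSq c (k+5) t)))
            * (pc c (k+2) j t * (lam₀ ^ j * Real.exp ((j:ℝ) * α * t)))
          - (α₂ * aSq c (k+1) t * aSq c (k+2) t * aSq c (k+3) t * aSq c (k+4) t)
            * (pc c k j t * (lam₀ ^ j * Real.exp ((j:ℝ) * α * t))) := by
      intro j _
      linear_combination (lam₀ ^ j * Real.exp ((j:ℝ) * α * t)) * hcoef j
    rw [Finset.sum_congr rfl step1, Finset.sum_sub_distrib, Finset.sum_sub_distrib,
      ← Finset.mul_sum, ← Finset.mul_sum, ← Finset.mul_sum,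
      opoly_ext c (k+4) (k+4) le_rfl lam₀ α t,
      opoly_ext c (k+2) (k+4) (by omega) lam₀ α t,
      opoly_ext c k (k+4) (by omega) lam₀ α t]
    push_cast
    ring
  rw [← hval]
  exact hder
end

section
/- Let α, α₁, α₂ ∈ ℝ and let (A_n)_{n≥0} be a real sequence satisfying the stationary nonisospectral Lotka–Volterra system: for all n ≥ 2, 2α + α₁(A_{n+1} − A_{n−1}) + α₂(A_{n+1}(A_n + A_{n+1} + A_{n+2}) − A_{n−1}(A_{n−2} + A_{n−1} + A_n)) = 0. Then there exists a real constant C such that for all n ≥ 1: 2nα + α₁(A_{n+1} + A_n) + α₂(A_{n+1}(A_n + A_{n+1} + A_{n+2}) + A_n(A_{n−1} + A_n + A_{n+1})) + C = 0. -/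
/-- First integral of the stationary nonisospectral Lotka–Volterra lattice, from which
the discrete Painlevé I equation is obtained. Here `A n` plays the role of the squared
recurrence coefficient `a_n²`. -/
theorem stationary_lotka_volterra_first_integral
    (α α₁ α₂ : ℝ) (A : ℕ → ℝ)
    (h : ∀ n : ℕ, 2 ≤ n →
      2 * α + α₁ * (A (n + 1) - A (n - 1))
        + α₂ * (A (n + 1) * (A n + A (n + 1) + A (n + 2))
            - A (n - 1) * (A (n - 2) + A (n - 1) + A n)) = 0) :
    ∃ C : ℝ, ∀ n : ℕ, 1 ≤ n →
      2 * (n : ℝ) * α + α₁ * (A (n + 1) + A n)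
        + α₂ * (A (n + 1) * (A n + A (n + 1) + A (n + 2))
            + A n * (A (n - 1) + A n + A (n + 1))) + C = 0 := by
  set F : ℕ → ℝ := fun n =>
    2 * (n : ℝ) * α + α₁ * (A (n + 1) + A n)
      + α₂ * (A (n + 1) * (A n + A (n + 1) + A (n + 2))
          + A n * (A (n - 1) + A n + A (n + 1))) with hF
  refine ⟨-F 1, fun n hn => ?_⟩
  have key : ∀ m : ℕ, 1 ≤ m → F (m + 1) = F m := by
    intro m hm
    have h2 := h (m + 1) (by omega)
    have e1 : m + 1 + 1 = m + 2 := by omega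
    have e2 : m + 1 - 1 = m := by omega
    have e3 : m + 1 - 2 = m - 1 := by omega
    rw [e1, e2, e3] at h2
    simp only [hF]
    push_cast
    nlinarith [h2]
  have main : ∀ n : ℕ, 1 ≤ n → F n = F 1 := by
    intro n hn
    induction n with
    | zero => omega
    | succ k ih =>
      rcases Nat.eq_or_lt_of_le hn with h1 | h1
      · rw [← h1]
      · have hk : 1 ≤ k := by omega
        rw [key k hk, ih hk]
  have := main n hn
  simp only [hF] at this ⊢
  linarith
end

section
/- Let m ≥ 1 be an integer, let α, α₁, α₂ ∈ ℝ, and let b_{n,l} (n ∈ ℕ, l ∈ {−1, 0, 1, …, m}) be real numbers with b_{n,−1} ≠ 0 for all n ≥ 1, satisfying for every n ≥ 1 the relation (m+1)α b_{n,−1} + α₁ b_{n,−1}(b_{n,0} − b_{n−1,0}) + α₂ b_{n,−1}(b_{n,1} b_{n+1,−1} + b_{n,0}(b_{n,0} + b_{n−1,0}) − b_{n−1,0}(b_{n−1,0} + b_{n,0}) − b_{n−1,−1} b_{n−2,1}) = 0 (with the convention b_{−1,1} given as part of the data). Then there exists a real constant A such that for all n ≥ 0: −α₂(b_{n+1,−1}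 b_{n,1} + b_{n,−1} b_{n−1,1} + b_{n,0}²) − α₁ b_{n,0} = (m+1) n α + A. -/
/-- First integral of the `l = −1` component of the stationary nonisospectral
Blaszak–Marciniak system: summing the relation (divided by `b_{n,−1}`) gives
`−α₂(b_{n+1,−1} b_{n,1} + b_{n,−1} b_{n−1,1} + b_{n,0}²) − α₁ b_{n,0} = (m+1) n α + A`.
Here `b n l` denotes the recurrence coefficient `b_{n,l}` (indices in `ℤ`, so that the
value `b_{−1,1}` is part of the data). -/
theorem stationary_BM_first_integral
    (m : ℕ) (hm : 1 ≤ m) (α α₁ α₂ : ℝ) (b : ℤ → ℤ → ℝ)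
    (hb : ∀ n : ℤ, 1 ≤ n → b n (-1) ≠ 0)
    (h : ∀ n : ℤ, 1 ≤ n →
      ((m : ℝ) + 1) * α * b n (-1)
        + α₁ * b n (-1) * (b n 0 - b (n - 1) 0)
        + α₂ * b n (-1) *
            (b n 1 * b (n + 1) (-1) + b n 0 * (b n 0 + b (n - 1) 0)
              - b (n - 1) 0 * (b (n - 1) 0 + b n 0)
              - b (n - 1) (-1) * b (n - 2) 1) = 0) :
    ∃ A : ℝ, ∀ n : ℤ, 0 ≤ n →
      -α₂ * (b (n + 1) (-1) * b n 1 + b n (-1) * b (n - 1) 1 + (b n 0) ^ 2)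
        - α₁ * b n 0 = ((m : ℝ) + 1) * (n : ℝ) * α + A := by
  set F : ℤ → ℝ := fun n =>
    -α₂ * (b (n + 1) (-1) * b n 1 + b n (-1) * b (n - 1) 1 + (b n 0) ^ 2)
      - α₁ * b n 0 with hF
  have key : ∀ n : ℤ, 1 ≤ n → F n = F (n - 1) + ((m : ℝ) + 1) * α := by
    intro n hn
    have hne := hb n hn
    have heq := h n hn
    have hdiv : ((m : ℝ) + 1) * α
        + α₁ * (b n 0 - b (n - 1) 0)
        + α₂ * (b n 1 * b (n + 1) (-1) + b n 0 * (b n 0 + b (n - 1) 0)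
            - b (n - 1) 0 * (b (n - 1) 0 + b n 0)
            - b (n - 1) (-1) * b (n - 2) 1) = 0 := by
      have := mul_left_cancel₀ hne (a := b n (-1))
        (b := ((m : ℝ) + 1) * α + α₁ * (b n 0 - b (n - 1) 0)
          + α₂ * (b n 1 * b (n + 1) (-1) + b n 0 * (b n 0 + b (n - 1) 0)
            - b (n - 1) 0 * (b (n - 1) 0 + b n 0)
            - b (n - 1) (-1) * b (n - 2) 1)) (c := 0)
      apply this
      rw [mul_zero]
      linarith [heq, mul_comm (b n (-1))
        (((m : ℝ) + 1) * α + α₁ * (b n 0 - b (n - 1) 0)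
          + α₂ * (b n 1 * b (n + 1) (-1) + b n 0 * (b n 0 + b (n - 1) 0)
            - b (n - 1) 0 * (b (n - 1) 0 + b n 0)
            - b (n - 1) (-1) * b (n - 2) 1))]
    simp only [hF]
    have e1 : n - 1 + 1 = n := by ring
    have e2 : n - 1 - 1 = n - 2 := by ring
    rw [e1, e2]
    nlinarith [hdiv]
  refine ⟨F 0, ?_⟩
  have main : ∀ k : ℕ, F (k : ℤ) = ((m : ℝ) + 1) * (k : ℝ) * α + F 0 := by
    intro k
    induction k with
    | zero => simp
    | succ j ih =>
      have hj1 : (1 : ℤ) ≤ (j : ℤ) + 1 := by omega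
      have hstep := key ((j : ℤ) + 1) hj1
      have e : (j : ℤ) + 1 - 1 = (j : ℤ) := by ring
      rw [e] at hstep
      push_cast
      push_cast at ih
      rw [hstep, ih]
      ring
  intro n hn
  obtain ⟨k, rfl⟩ := Int.eq_ofNat_of_zero_le hn
  have := main k
  simpa [hF] using this
end

section
/- Let k ≥ 1 be an integer and α, α₁, α₂ ∈ ℝ with α ≠ 0, α·α₁ < 0 and α·α₂ > 0. For j ∈ ℤ and t ∈ ℝ define c_j(t) = ∫₀^∞ s^j e^{jαt} exp((α₁/(kα)) s^k e^{kαt} − (α₂/(kα)) s^{−k} e^{−kαt}) ds. Then each integral converges, each c_j is differentiable on ℝ, and the moments simultaneously satisfy c_j'(t) = α j c_j(t) + α₁ c_{j+k}(t) + α₂ c_{j−k}(t) and c_j'(t) = −α c_j(t) for all j ∈ ℤ and all t ∈ ℝ. -/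
open MeasureTheory

open Set Filter Topology

private lemma aux_pow_le_exp (x : ℝ) (hx : 0 ≤ x) (n : ℕ) :
    x ^ n ≤ (n : ℝ) ^ n * Real.exp x := by
  rcases Nat.eq_zero_or_pos n with rfl | hn
  · simpa using Real.one_le_exp hx
  · have hn' : (0:ℝ) < n := by exact_mod_cast hn
    have h1 : x / n ≤ Real.exp (x / n) := by
      have := Real.add_one_le_exp (x / n); linarith
    have h2 : (x / n) ^ n ≤ Real.exp (x / n) ^ n :=
      pow_le_pow_left₀ (by positivity) h1 n
    rw [div_pow, ← Real.exp_nat_mul, mul_div_cancel₀ _ hn'.ne'] at h2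
    rw [mul_comm, ← div_le_iff₀ (by positivity : (0:ℝ) < (n:ℝ) ^ n)]
    exact h2

private lemma aux_bound_Ioc (k : ℕ) (hk : 1 ≤ k) (A B : ℝ) (hA : A ≤ 0) (hB : 0 < B) (j : ℤ) :
    ∀ u ∈ Set.Ioc (0:ℝ) 1,
      u ^ j * Real.exp (A * u ^ k - B * u ^ (-(k:ℤ))) ≤
        (((-j).toNat : ℝ) ^ (-j).toNat / B ^ (-j).toNat) := by
  intro u hu
  obtain ⟨hu0, hu1⟩ := hu
  set m : ℕ := (-j).toNat with hm
  have hu0' : u ≠ 0 := ne_of_gt hu0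
  have hv1 : 1 ≤ u⁻¹ := (one_le_inv₀ hu0).mpr hu1
  have hv0 : 0 < u⁻¹ := inv_pos.mpr hu0
  have s1 : u ^ j ≤ u⁻¹ ^ m := by
    have e : u ^ j = u⁻¹ ^ m * u ^ (j + m) := by
      rw [← zpow_natCast u⁻¹ m, inv_zpow, ← zpow_neg, ← zpow_add₀ hu0']
      congr 1; ring
    have h1 : u ^ (j + (m:ℤ)) ≤ 1 := by
      rw [show j + (m:ℤ) = ((j + m).toNat : ℤ) by omega, zpow_natCast]
      exact pow_le_one₀ hu0.le hu1
    have h2 : (0:ℝ) ≤ u⁻¹ ^ m := by positivity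
    rw [e]
    simpa using mul_le_mul_of_nonneg_left h1 h2
  have s2 : Real.exp (A * u ^ k - B * u ^ (-(k:ℤ))) ≤ Real.exp (-(B * u⁻¹)) := by
    apply Real.exp_le_exp.mpr
    have hAk : A * u ^ k ≤ 0 := mul_nonpos_of_nonpos_of_nonneg hA (by positivity)
    have huk : u⁻¹ ≤ u ^ (-(k:ℤ)) := by
      rw [zpow_neg, zpow_natCast, ← inv_pow]
      calc u⁻¹ = u⁻¹ ^ 1 := (pow_one _).symm
        _ ≤ u⁻¹ ^ k := pow_le_pow_right₀ hv1 hk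
    have : B * u⁻¹ ≤ B * u ^ (-(k:ℤ)) := mul_le_mul_of_nonneg_left huk hB.le
    linarith
  have s3 : u⁻¹ ^ m * Real.exp (-(B * u⁻¹)) ≤ (m:ℝ) ^ m / B ^ m := by
    have h := aux_pow_le_exp (B * u⁻¹) (by positivity) m
    rw [mul_pow] at h
    rw [Real.exp_neg, ← div_eq_mul_inv, div_le_div_iff₀ (Real.exp_pos _) (by positivity)]
    calc u⁻¹ ^ m * B ^ m = B ^ m * u⁻¹ ^ m := by ring
      _ ≤ (m:ℝ) ^ m * Real.exp (B * u⁻¹) := h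
  calc u ^ j * Real.exp (A * u ^ k - B * u ^ (-(k:ℤ)))
      ≤ u⁻¹ ^ m * Real.exp (A * u ^ k - B * u ^ (-(k:ℤ))) :=
        mul_le_mul_of_nonneg_right s1 (Real.exp_pos _).le
    _ ≤ u⁻¹ ^ m * Real.exp (-(B * u⁻¹)) := mul_le_mul_of_nonneg_left s2 (by positivity)
    _ ≤ (m:ℝ) ^ m / B ^ m := s3

private lemma aux_bound_Ioi (k : ℕ) (hk : 1 ≤ k) (A B : ℝ) (hA : A < 0) (hB : 0 ≤ B) (j : ℤ) :
    ∀ u : ℝ, 1 ≤ u →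
      u ^ j * Real.exp (A * u ^ k - B * u ^ (-(k:ℤ))) ≤
        ((j.toNat : ℝ) ^ j.toNat / (-A/2) ^ j.toNat) * Real.exp (A/2 * u) := by
  intro u hu
  have hu0 : (0:ℝ) < u := lt_of_lt_of_le one_pos hu
  set n : ℕ := j.toNat with hn
  have hε : (0:ℝ) < -A/2 := by linarith
  have s1 : u ^ j ≤ u ^ n := by
    have e : u ^ (n:ℤ) = u ^ j * u ^ ((n:ℤ) - j) := by
      rw [← zpow_add₀ hu0.ne']; congr 1; ring
    have h1 : (1:ℝ) ≤ u ^ ((n:ℤ) - j) := by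
      rw [show (n:ℤ) - j = (((n:ℤ) - j).toNat : ℤ) by omega, zpow_natCast]
      exact one_le_pow₀ hu
    calc u ^ j = u ^ j * 1 := (mul_one _).symm
      _ ≤ u ^ j * u ^ ((n:ℤ) - j) := mul_le_mul_of_nonneg_left h1 (zpow_pos hu0 j).le
      _ = u ^ (n:ℤ) := e.symm
      _ = u ^ n := zpow_natCast u n
  have s2 : Real.exp (A * u ^ k - B * u ^ (-(k:ℤ))) ≤ Real.exp (A * u) := by
    apply Real.exp_le_exp.mpr
    have h1 : u ≤ u ^ k := le_self_pow₀ hu (by omega)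
    have h2 : A * u ^ k ≤ A * u := mul_le_mul_of_nonpos_left h1 hA.le
    have h3 : 0 ≤ B * u ^ (-(k:ℤ)) := by positivity
    linarith
  have key : u ^ n * Real.exp (A/2 * u) ≤ (n:ℝ) ^ n / (-A/2) ^ n := by
    rw [le_div_iff₀ (by positivity : (0:ℝ) < (-A/2) ^ n)]
    have h := aux_pow_le_exp ((-A/2) * u) (by positivity) n
    rw [mul_pow] at h
    have h2 := mul_le_mul_of_nonneg_right h (Real.exp_pos (A/2 * u)).le
    rw [mul_assoc ((n:ℝ) ^ n), ← Real.exp_add, show (-A/2) * u + A/2 * u = 0 by ring,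
      Real.exp_zero, mul_one] at h2
    calc u ^ n * Real.exp (A/2 * u) * (-A/2) ^ n
        = (-A/2) ^ n * u ^ n * Real.exp (A/2 * u) := by ring
      _ ≤ (n:ℝ) ^ n := h2
  have s3 : u ^ n * Real.exp (A * u) ≤ ((n:ℝ) ^ n / (-A/2) ^ n) * Real.exp (A/2 * u) := by
    have h2 := mul_le_mul_of_nonneg_right key (Real.exp_pos (A/2 * u)).le
    calc u ^ n * Real.exp (A * u)
        = u ^ n * Real.exp (A/2 * u) * Real.exp (A/2 * u) := by
          rw [mul_assoc, ← Real.exp_add, show A/2 * u + A/2 * u = A * u by ring]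
      _ ≤ (n:ℝ) ^ n / (-A/2) ^ n * Real.exp (A/2 * u) := h2
  calc u ^ j * Real.exp (A * u ^ k - B * u ^ (-(k:ℤ)))
      ≤ u ^ n * Real.exp (A * u ^ k - B * u ^ (-(k:ℤ))) :=
        mul_le_mul_of_nonneg_right s1 (Real.exp_pos _).le
    _ ≤ u ^ n * Real.exp (A * u) := mul_le_mul_of_nonneg_left s2 (by positivity)
    _ ≤ _ := s3

private lemma aux_continuousOn (k : ℕ) (A B : ℝ) (j : ℤ) :
    ContinuousOn (fun u : ℝ => u ^ j * Real.exp (A * u ^ k - B * u ^ (-(k:ℤ))))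
      (Set.Ioi 0) := by
  have h0 : Set.Ioi (0:ℝ) ⊆ {0}ᶜ := fun x hx => ne_of_gt hx
  refine ((continuousOn_zpow₀ j).mono h0).mul (Real.continuous_exp.comp_continuousOn ?_)
  exact ((continuous_const.mul (continuous_pow k)).continuousOn).sub
    (continuous_const.continuousOn.mul ((continuousOn_zpow₀ (-(k:ℤ))).mono h0))

private lemma aux_nonneg (k : ℕ) (A B : ℝ) (j : ℤ) {u : ℝ} (hu : 0 < u) :
    0 ≤ u ^ j * Real.exp (A * u ^ k - B * u ^ (-(k:ℤ))) :=
  mul_nonneg (zpow_pos hu j).le (Real.exp_pos _).le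

private lemma aux_integrable (k : ℕ) (hk : 1 ≤ k) (A B : ℝ) (hA : A < 0) (hB : 0 < B) (j : ℤ) :
    IntegrableOn (fun u : ℝ => u ^ j * Real.exp (A * u ^ k - B * u ^ (-(k:ℤ))))
      (Set.Ioi 0) := by
  rw [← Set.Ioc_union_Ioi_eq_Ioi (zero_le_one (α := ℝ))]
  apply IntegrableOn.union
  · refine Integrable.mono'
      (g := fun _ => (((-j).toNat : ℝ) ^ (-j).toNat / B ^ (-j).toNat))
      (integrableOn_const measure_Ioc_lt_top.ne)
      (((aux_continuousOn k A B j).mono Set.Ioc_subset_Ioi_self).aestronglyMeasurable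
        measurableSet_Ioc) ?_
    rw [ae_restrict_iff' measurableSet_Ioc]
    filter_upwards with u hu
    rw [Real.norm_eq_abs, abs_of_nonneg (aux_nonneg k A B j hu.1)]
    exact aux_bound_Ioc k hk A B hA.le hB j u hu
  · have hint : IntegrableOn
        (fun u : ℝ => ((j.toNat : ℝ) ^ j.toNat / (-A/2) ^ j.toNat) * Real.exp (A/2 * u))
        (Set.Ioi 1) := by
      have := (exp_neg_integrableOn_Ioi 1 (show (0:ℝ) < -(A/2) by linarith)).const_mul
        ((j.toNat : ℝ) ^ j.toNat / (-A/2) ^ j.toNat)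
      simpa [neg_neg, neg_mul, IntegrableOn] using this
    refine hint.mono' (((aux_continuousOn k A B j).mono
      (Set.Ioi_subset_Ioi zero_le_one)).aestronglyMeasurable measurableSet_Ioi) ?_
    rw [ae_restrict_iff' measurableSet_Ioi]
    filter_upwards with u hu
    rw [Real.norm_eq_abs, abs_of_nonneg (aux_nonneg k A B j (lt_trans one_pos hu))]
    exact aux_bound_Ioi k hk A B hA (le_of_lt hB) j u hu.le

private lemma aux_tendsto_top (k : ℕ) (hk : 1 ≤ k) (A B : ℝ) (hA : A < 0) (hB : 0 < B) (j : ℤ) :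
    Tendsto (fun u : ℝ => u ^ j * Real.exp (A * u ^ k - B * u ^ (-(k:ℤ)))) atTop (𝓝 0) := by
  have hC : Tendsto (fun u : ℝ => ((j.toNat : ℝ) ^ j.toNat / (-A/2) ^ j.toNat) *
      Real.exp (A/2 * u)) atTop (𝓝 0) := by
    have h1 : Tendsto (fun u : ℝ => A/2 * u) atTop atBot :=
      Tendsto.const_mul_atTop_of_neg (by linarith : A/2 < 0) tendsto_id
    have h2 : Tendsto (fun u : ℝ => Real.exp (A/2 * u)) atTop (𝓝 0) :=
      Real.tendsto_exp_atBot.comp h1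
    simpa using h2.const_mul ((j.toNat : ℝ) ^ j.toNat / (-A/2) ^ j.toNat)
  apply tendsto_of_tendsto_of_tendsto_of_le_of_le' tendsto_const_nhds hC
  · filter_upwards [eventually_gt_atTop (0:ℝ)] with u hu using aux_nonneg k A B j hu
  · filter_upwards [eventually_ge_atTop (1:ℝ)] with u hu using aux_bound_Ioi k hk A B hA hB.le j u hu

private lemma aux_tendsto_zero (k : ℕ) (hk : 1 ≤ k) (A B : ℝ) (hA : A < 0) (hB : 0 < B) (j : ℤ) :
    Tendsto (fun u : ℝ => u ^ j * Real.exp (A * u ^ k - B * u ^ (-(k:ℤ))))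
      (𝓝[>] (0:ℝ)) (𝓝 0) := by
  set C : ℝ := (((-(j-1)).toNat : ℝ) ^ (-(j-1)).toNat / B ^ (-(j-1)).toNat) with hC
  have hmul : Tendsto (fun u : ℝ => u * C) (𝓝[>] (0:ℝ)) (𝓝 0) := by
    have := (tendsto_id.mono_left nhdsWithin_le_nhds :
      Tendsto (fun u : ℝ => u) (𝓝[>] (0:ℝ)) (𝓝 0)).mul_const C
    simpa using this
  apply tendsto_of_tendsto_of_tendsto_of_le_of_le' tendsto_const_nhds hmul
  · filter_upwards [self_mem_nhdsWithin] with u hu using aux_nonneg k A B j hu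
  · filter_upwards [Ioc_mem_nhdsGT_of_mem (Set.left_mem_Ico.mpr one_pos)] with u hu
    have hu0 : (0:ℝ) < u := hu.1
    have e : u ^ j = u * u ^ (j - 1) := by
      have := zpow_add₀ (ne_of_gt hu0) 1 (j - 1)
      simpa using this
    calc u ^ j * Real.exp (A * u ^ k - B * u ^ (-(k:ℤ)))
        = u * (u ^ (j-1) * Real.exp (A * u ^ k - B * u ^ (-(k:ℤ)))) := by rw [e]; ring
      _ ≤ u * C := mul_le_mul_of_nonneg_left
          (aux_bound_Ioc k hk A B hA.le hB (j-1) u hu) hu0.le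

private lemma aux_identity (k : ℕ) (hk : 1 ≤ k) (A B : ℝ) (hA : A < 0) (hB : 0 < B) (j : ℤ) :
    ((j:ℝ) + 1) * (∫ u in Set.Ioi (0:ℝ), u ^ j * Real.exp (A * u ^ k - B * u ^ (-(k:ℤ))))
      + ((k:ℝ) * A) * (∫ u in Set.Ioi (0:ℝ), u ^ (j + (k:ℤ)) * Real.exp (A * u ^ k - B * u ^ (-(k:ℤ))))
      + ((k:ℝ) * B) * (∫ u in Set.Ioi (0:ℝ), u ^ (j - (k:ℤ)) * Real.exp (A * u ^ k - B * u ^ (-(k:ℤ))))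
      = 0 := by
  set E : ℝ → ℝ := fun u => Real.exp (A * u ^ k - B * u ^ (-(k:ℤ))) with hE
  set F : ℝ → ℝ := fun u => if u ≤ 0 then 0 else u ^ (j + 1) * E u with hF
  have hderiv : ∀ x ∈ Set.Ioi (0:ℝ), HasDerivAt F
      (((j:ℝ) + 1) * (x ^ j * E x) + ((k:ℝ) * A) * (x ^ (j + (k:ℤ)) * E x)
        + ((k:ℝ) * B) * (x ^ (j - (k:ℤ)) * E x)) x := by
    intro x hx
    have hx0 : (0:ℝ) < x := hx
    have hx' : x ≠ 0 := ne_of_gt hx0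
    have h1 : HasDerivAt (fun u : ℝ => u ^ (j + 1)) (((j:ℝ) + 1) * x ^ j) x := by
      have := hasDerivAt_zpow (j + 1) x (Or.inl hx')
      simpa [add_sub_cancel_right] using this
    have hinner := ((hasDerivAt_pow k x).const_mul A).sub
      ((hasDerivAt_zpow (-(k:ℤ)) x (Or.inl hx')).const_mul B)
    have hEd := hinner.exp
    have hF0 := h1.mul hEd
    have heq : F =ᶠ[nhds x] fun u => u ^ (j + 1) * E u := by
      filter_upwards [eventually_gt_nhds hx0] with u hu
      simp only [hF]
      rw [if_neg (not_le.mpr hu)]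
    have hder2 := hF0.congr_of_eventuallyEq heq
    refine hder2.congr_deriv (Eq.symm ?_)
    have e1 : x ^ (j + 1) * x ^ ((k - 1 : ℕ) : ℤ) = x ^ (j + (k:ℤ)) := by
      rw [← zpow_add₀ hx']
      congr 1
      omega
    have e2 : x ^ (j + 1) * x ^ (-(k:ℤ) - 1) = x ^ (j - (k:ℤ)) := by
      rw [← zpow_add₀ hx']
      congr 1
      ring
    rw [← zpow_natCast x (k - 1)] at *
    simp only [hE, Pi.sub_apply]
    push_cast
    linear_combination (-A * (k:ℝ) * Real.exp (A * x ^ k - B * x ^ (-(k:ℤ)))) * e1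
      + (-B * (k:ℝ) * Real.exp (A * x ^ k - B * x ^ (-(k:ℤ)))) * e2
  have i1 : Integrable (fun x : ℝ => ((j:ℝ) + 1) * (x ^ j * E x))
      (volume.restrict (Set.Ioi 0)) := (aux_integrable k hk A B hA hB j).const_mul _
  have i2 : Integrable (fun x : ℝ => ((k:ℝ) * A) * (x ^ (j + (k:ℤ)) * E x))
      (volume.restrict (Set.Ioi 0)) := (aux_integrable k hk A B hA hB (j + k)).const_mul _
  have i3 : Integrable (fun x : ℝ => ((k:ℝ) * B) * (x ^ (j - (k:ℤ)) * E x))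
      (volume.restrict (Set.Ioi 0)) := (aux_integrable k hk A B hA hB (j - k)).const_mul _
  have i12 : Integrable (fun x : ℝ => ((j:ℝ) + 1) * (x ^ j * E x)
      + ((k:ℝ) * A) * (x ^ (j + (k:ℤ)) * E x)) (volume.restrict (Set.Ioi 0)) := i1.add i2
  have f'int : IntegrableOn (fun x : ℝ => ((j:ℝ) + 1) * (x ^ j * E x)
      + ((k:ℝ) * A) * (x ^ (j + (k:ℤ)) * E x)
      + ((k:ℝ) * B) * (x ^ (j - (k:ℤ)) * E x)) (Set.Ioi (0:ℝ)) := i12.add i3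
  have hcont : ContinuousWithinAt F (Set.Ici (0:ℝ)) 0 := by
    rw [← continuousWithinAt_Ioi_iff_Ici]
    have hF00 : F 0 = 0 := by simp only [hF]; rw [if_pos le_rfl]
    unfold ContinuousWithinAt
    rw [hF00]
    apply (aux_tendsto_zero k hk A B hA hB (j + 1)).congr'
    filter_upwards [self_mem_nhdsWithin] with u (hu : (0:ℝ) < u)
    simp only [hF]
    rw [if_neg (not_le.mpr hu)]
  have htop : Tendsto F atTop (𝓝 0) := by
    apply (aux_tendsto_top k hk A B hA hB (j + 1)).congr'
    filter_upwards [eventually_gt_atTop (0:ℝ)] with u hu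
    simp only [hF]
    rw [if_neg (not_le.mpr hu)]
  have key := integral_Ioi_of_hasDerivAt_of_tendsto hcont hderiv f'int htop
  have hF00 : F 0 = 0 := by simp only [hF]; rw [if_pos le_rfl]
  rw [hF00, sub_zero] at key
  have expand : (∫ x in Set.Ioi (0:ℝ), (((j:ℝ) + 1) * (x ^ j * E x)
      + ((k:ℝ) * A) * (x ^ (j + (k:ℤ)) * E x)
      + ((k:ℝ) * B) * (x ^ (j - (k:ℤ)) * E x)))
      = ((j:ℝ) + 1) * (∫ x in Set.Ioi (0:ℝ), x ^ j * E x)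
      + ((k:ℝ) * A) * (∫ x in Set.Ioi (0:ℝ), x ^ (j + (k:ℤ)) * E x)
      + ((k:ℝ) * B) * (∫ x in Set.Ioi (0:ℝ), x ^ (j - (k:ℤ)) * E x) := by
    rw [integral_add i12 i3, integral_add i1 i2, integral_const_mul,
      integral_const_mul, integral_const_mul]
  rw [expand] at key
  exact key


/-- The deformed moments associated with generalized Laurent biorthogonal polynomials
(indexed by all integers `j`):
`c_j(t) = ∫₀^∞ s^j e^{jαt} exp((α₁/(kα)) s^k e^{kαt} − (α₂/(kα)) s^{−k} e^{−kαt}) ds`. -/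
noncomputable def deformedMomentLaurent (k : ℕ) (α α₁ α₂ : ℝ) (j : ℤ) (t : ℝ) : ℝ :=
  ∫ s in Set.Ioi (0 : ℝ),
    s ^ j * Real.exp ((j : ℝ) * α * t) *
      Real.exp (α₁ / (k * α) * s ^ k * Real.exp (k * α * t)
        - α₂ / (k * α) * s ^ (-(k : ℤ)) * Real.exp (-(k : ℝ) * α * t))

private lemma aux_scale (k : ℕ) (α α₁ α₂ : ℝ) (j : ℤ) (t : ℝ) :
    deformedMomentLaurent k α α₁ α₂ j t =
      Real.exp (-(α * t)) *
        ∫ u in Set.Ioi (0:ℝ), u ^ j *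
          Real.exp (α₁ / (k * α) * u ^ k - α₂ / (k * α) * u ^ (-(k:ℤ))) := by
  have hc : 0 < Real.exp (α * t) := Real.exp_pos _
  have h1 : (Real.exp (α * t)) ^ k = Real.exp ((k:ℝ) * α * t) := by
    rw [← Real.exp_nat_mul]; congr 1; ring
  have h2 : (Real.exp (α * t)) ^ (-(k:ℤ)) = Real.exp (-(k:ℝ) * α * t) := by
    rw [← Real.rpow_intCast, ← Real.exp_mul]; congr 1; push_cast; ring
  have h3 : (Real.exp (α * t)) ^ j = Real.exp ((j:ℝ) * α * t) := by
    rw [← Real.rpow_intCast, ← Real.exp_mul]; congr 1; ring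
  have hfun : ∀ s : ℝ,
      s ^ j * Real.exp ((j:ℝ) * α * t) *
        Real.exp (α₁ / (k * α) * s ^ k * Real.exp ((k:ℝ) * α * t)
          - α₂ / (k * α) * s ^ (-(k:ℤ)) * Real.exp (-(k:ℝ) * α * t)) =
      (fun u : ℝ => u ^ j * Real.exp (α₁ / (k * α) * u ^ k - α₂ / (k * α) * u ^ (-(k:ℤ))))
        (Real.exp (α * t) * s) := by
    intro s
    simp only [mul_zpow, mul_pow, h1, h2, h3]
    rw [show α₁ / (k*α) * (Real.exp ((k:ℝ)*α*t) * s ^ k)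
        - α₂ / (k*α) * (Real.exp (-(k:ℝ)*α*t) * s ^ (-(k:ℤ)))
        = α₁ / (k*α) * s ^ k * Real.exp ((k:ℝ)*α*t)
        - α₂ / (k*α) * s ^ (-(k:ℤ)) * Real.exp (-(k:ℝ)*α*t) from by ring]
    ring
  unfold deformedMomentLaurent
  calc (∫ s in Set.Ioi (0:ℝ),
        s ^ j * Real.exp ((j:ℝ) * α * t) *
          Real.exp (α₁ / (k * α) * s ^ k * Real.exp ((k:ℝ) * α * t)
            - α₂ / (k * α) * s ^ (-(k:ℤ)) * Real.exp (-(k:ℝ) * α * t)))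
      = ∫ s in Set.Ioi (0:ℝ),
          (fun u : ℝ => u ^ j * Real.exp (α₁ / (k * α) * u ^ k - α₂ / (k * α) * u ^ (-(k:ℤ))))
            (Real.exp (α * t) * s) :=
        integral_congr_ae (Filter.Eventually.of_forall hfun)
    _ = (Real.exp (α * t))⁻¹ • ∫ u in Set.Ioi (Real.exp (α * t) * 0),
          u ^ j * Real.exp (α₁ / (k * α) * u ^ k - α₂ / (k * α) * u ^ (-(k:ℤ))) :=
        integral_comp_mul_left_Ioi
          (fun u : ℝ => u ^ j * Real.exp (α₁ / (k * α) * u ^ k - α₂ / (k * α) * u ^ (-(k:ℤ))))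
          0 hc
    _ = Real.exp (-(α * t)) *
          ∫ u in Set.Ioi (0:ℝ), u ^ j *
            Real.exp (α₁ / (k * α) * u ^ k - α₂ / (k * α) * u ^ (-(k:ℤ))) := by
        rw [mul_zero, smul_eq_mul, ← Real.exp_neg]


/-- The moments simultaneously satisfy the nonisospectral evolution
`c_j' = α j c_j + α₁ c_{j+k} + α₂ c_{j−k}` and the stationarity relation `c_j' = −α c_j`. -/
theorem deformedMomentLaurent_evolution (k : ℕ) (hk : 1 ≤ k)
    (α α₁ α₂ : ℝ) (hα : α ≠ 0) (hαα₁ : α * α₁ < 0) (hαα₂ : 0 < α * α₂) :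
    (∀ (j : ℤ) (t : ℝ), IntegrableOn
      (fun s : ℝ => s ^ j * Real.exp ((j : ℝ) * α * t) *
        Real.exp (α₁ / (k * α) * s ^ k * Real.exp (k * α * t)
          - α₂ / (k * α) * s ^ (-(k : ℤ)) * Real.exp (-(k : ℝ) * α * t)))
      (Set.Ioi (0 : ℝ))) ∧
    (∀ (j : ℤ) (t : ℝ), HasDerivAt (fun u => deformedMomentLaurent k α α₁ α₂ j u)
      (α * (j : ℝ) * deformedMomentLaurent k α α₁ α₂ j t
        + α₁ * deformedMomentLaurent k α α₁ α₂ (j + k) t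
        + α₂ * deformedMomentLaurent k α α₁ α₂ (j - k) t) t) ∧
    (∀ (j : ℤ) (t : ℝ), HasDerivAt (fun u => deformedMomentLaurent k α α₁ α₂ j u)
      (-α * deformedMomentLaurent k α α₁ α₂ j t) t) := by

  have hkR : (0:ℝ) < (k:ℝ) := by exact_mod_cast Nat.lt_of_lt_of_le Nat.zero_lt_one hk
  have hα2 : (0:ℝ) < α ^ 2 := by
    rcases lt_or_gt_of_ne hα with h | h <;> nlinarith
  have hden : (0:ℝ) < (k:ℝ) * α ^ 2 := mul_pos hkR hα2
  have hkα : (k:ℝ) * α ≠ 0 := mul_ne_zero hkR.ne' hα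
  have hA : α₁ / ((k:ℝ) * α) < 0 := by
    have h2 : α₁ / ((k:ℝ) * α) = (α * α₁) / ((k:ℝ) * α ^ 2) := by
      rw [div_eq_div_iff hkα hden.ne']
      ring
    rw [h2]
    exact div_neg_of_neg_of_pos hαα₁ hden
  have hB : 0 < α₂ / ((k:ℝ) * α) := by
    have h2 : α₂ / ((k:ℝ) * α) = (α * α₂) / ((k:ℝ) * α ^ 2) := by
      rw [div_eq_div_iff hkα hden.ne']
      ring
    rw [h2]
    exact div_pos hαα₂ hden
  set I : ℤ → ℝ := fun j => ∫ u in Set.Ioi (0:ℝ),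
    u ^ j * Real.exp (α₁ / ((k:ℝ) * α) * u ^ k - α₂ / ((k:ℝ) * α) * u ^ (-(k:ℤ))) with hI
  have hscale : ∀ (j : ℤ) (t : ℝ),
      deformedMomentLaurent k α α₁ α₂ j t = Real.exp (-(α * t)) * I j :=
    fun j t => aux_scale k α α₁ α₂ j t
  have hder : ∀ (j : ℤ) (t : ℝ), HasDerivAt (fun u => deformedMomentLaurent k α α₁ α₂ j u)
      (-α * deformedMomentLaurent k α α₁ α₂ j t) t := by
    intro j t
    have hfun : (fun u => deformedMomentLaurent k α α₁ α₂ j u)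
        = fun u => Real.exp (-(α * u)) * I j := funext fun u => hscale j u
    rw [hfun, hscale j t]
    have h1 : HasDerivAt (fun u : ℝ => -(α * u)) (-α) t := by
      simpa [Pi.neg_def] using ((hasDerivAt_id t).const_mul α).neg
    have h2 := (h1.exp).mul_const (I j)
    refine h2.congr_deriv (Eq.symm ?_)
    ring
  refine ⟨?_, ?_, fun j t => hder j t⟩
  · intro j t
    have hA' : (α₁ / ((k:ℝ) * α)) * Real.exp ((k:ℝ) * α * t) < 0 :=
      mul_neg_of_neg_of_pos hA (Real.exp_pos _)
    have hB' : 0 < (α₂ / ((k:ℝ) * α)) * Real.exp (-(k:ℝ) * α * t) :=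
      mul_pos hB (Real.exp_pos _)
    have h := (aux_integrable k hk _ _ hA' hB' j).const_mul (Real.exp ((j:ℝ) * α * t))
    refine IntegrableOn.congr_fun h (fun s hs => ?_) measurableSet_Ioi
    rw [show α₁ / ((k:ℝ) * α) * Real.exp ((k:ℝ) * α * t) * s ^ k
        - α₂ / ((k:ℝ) * α) * Real.exp (-(k:ℝ) * α * t) * s ^ (-(k:ℤ))
        = α₁ / ((k:ℝ) * α) * s ^ k * Real.exp ((k:ℝ) * α * t)
        - α₂ / ((k:ℝ) * α) * s ^ (-(k:ℤ)) * Real.exp (-(k:ℝ) * α * t) from by ring]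
    ring
  · intro j t
    have h := hder j t
    convert h using 1
    rw [hscale j t, hscale (j + (k:ℤ)) t, hscale (j - (k:ℤ)) t]
    have hident : ((j:ℝ) + 1) * I j + ((k:ℝ) * (α₁ / ((k:ℝ) * α))) * I (j + (k:ℤ))
        + ((k:ℝ) * (α₂ / ((k:ℝ) * α))) * I (j - (k:ℤ)) = 0 :=
      aux_identity k hk (α₁ / ((k:ℝ) * α)) (α₂ / ((k:ℝ) * α)) hA hB j
    have hkA : α * ((k:ℝ) * (α₁ / ((k:ℝ) * α))) = α₁ := by field_simp
    have hkB : α * ((k:ℝ) * (α₂ / ((k:ℝ) * α))) = α₂ := by field_simp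
    linear_combination (Real.exp (-(α * t)) * α) * hident
      - (Real.exp (-(α * t)) * I (j + (k:ℤ))) * hkA
      - (Real.exp (-(α * t)) * I (j - (k:ℤ))) * hkB
end

section
/- Let α, α₁, α₂ ∈ ℝ with α₁ ≠ 0 and α₂ ≠ 0, and let (a_n)_{n≥0}, (b_n)_{n≥0} be real sequences with a_n ≠ 0 and b_n ≠ 0 for all n, satisfying for all n ≥ 1: α a_n + α₁ a_n(a_{n−1} − a_{n+1} + b_n − b_{n−1}) + α₂ a_n(1/b_n − 1/b_{n−1}) = 0 and α b_n + α₁ b_n(a_n − a_{n+1}) + α₂(a_{n+1}/b_{n+1} − a_n/b_{n−1}) = 0. Then there exist real constants A₀ and B₀ such that for all n ≥ 0: α₁(b_n − a_{n+1} − a_n) + α₂/b_n + nα + A₀ = 0 and α₁ a_{n+1} − α₂ a_{n+1}/(b_n b_{n+1}) − nα − B₀ = 0; moreover, if α₁ b_n b_{n+1} − α₂ ≠ 0 for all n ≥ 0, then a_{n+1} = (nα + B₀) b_n b_{n+1}/(α₁ b_n b_{n+1} − α₂) and the sequence (b_n) alone satisfies, for all n ≥ 1, the second-order difference equation α₁(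 b_n − (nα + B₀) b_n b_{n+1}/(α₁ b_n b_{n+1} − α₂) − ((n−1)α + B₀) b_{n−1} b_n/(α₁ b_{n−1} b_n − α₂) ) + α₂/b_n + nα + A₀ = 0. -/
/-- The stationary nonisospectral mixed relativistic Toda lattice (case `k = 1`):
first integrals and the resulting second-order difference equation for `(b_n)`
(the alternate discrete Painlevé II equation after a change of variables). -/
theorem stationary_rToda_alt_dPII
    (α α₁ α₂ : ℝ) (hα₁ : α₁ ≠ 0) (hα₂ : α₂ ≠ 0)
    (a b : ℕ → ℝ) (ha : ∀ n, a n ≠ 0) (hb : ∀ n, b n ≠ 0)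
    (h1 : ∀ n : ℕ, 1 ≤ n →
      α * a n + α₁ * a n * (a (n - 1) - a (n + 1) + b n - b (n - 1))
        + α₂ * a n * (1 / b n - 1 / b (n - 1)) = 0)
    (h2 : ∀ n : ℕ, 1 ≤ n →
      α * b n + α₁ * b n * (a n - a (n + 1))
        + α₂ * (a (n + 1) / b (n + 1) - a n / b (n - 1)) = 0) :
    ∃ A₀ B₀ : ℝ,
      (∀ n : ℕ,
        α₁ * (b n - a (n + 1) - a n) + α₂ / b n + (n : ℝ) * α + A₀ = 0 ∧
        α₁ * a (n + 1) - α₂ * a (n + 1) / (b n * b (n + 1)) - (n : ℝ) * α - B₀ = 0) ∧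
      ((∀ n : ℕ, α₁ * b n * b (n + 1) - α₂ ≠ 0) →
        (∀ n : ℕ, a (n + 1) =
          ((n : ℝ) * α + B₀) * b n * b (n + 1) / (α₁ * b n * b (n + 1) - α₂)) ∧
        (∀ n : ℕ, 1 ≤ n →
          α₁ * (b n
              - ((n : ℝ) * α + B₀) * b n * b (n + 1) / (α₁ * b n * b (n + 1) - α₂)
              - (((n : ℝ) - 1) * α + B₀) * b (n - 1) * b n /
                  (α₁ * b (n - 1) * b n - α₂))
            + α₂ / b n + (n : ℝ) * α + A₀ = 0)) := by
  set A₀ : ℝ := -(α₁ * (b 0 - a 1 - a 0) + α₂ / b 0) with hA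
  set B₀ : ℝ := α₁ * a 1 - α₂ * a 1 / (b 0 * b 1) with hB
  have key : ∀ n : ℕ,
      (α₁ * (b n - a (n + 1) - a n) + α₂ / b n + (n : ℝ) * α + A₀ = 0 ∧
       α₁ * a (n + 1) - α₂ * a (n + 1) / (b n * b (n + 1)) - (n : ℝ) * α - B₀ = 0) := by
    intro n
    induction n with
    | zero => constructor <;> · push_cast; simp only [hA, hB]; ring
    | succ n ih =>
      obtain ⟨ih1, ih2⟩ := ih
      have H1 := h1 (n + 1) (by omega)
      have H2 := h2 (n + 1) (by omega)
      simp only [Nat.add_sub_cancel] at H1 H2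
      constructor
      · have H1' : α + α₁ * (a n - a (n + 2) + b (n + 1) - b n)
            + α₂ * (1 / b (n + 1) - 1 / b n) = 0 := by
          apply mul_left_cancel₀ (ha (n + 1))
          linear_combination H1
        push_cast
        linear_combination ih1 + H1'
      · have H2' : α + α₁ * (a (n + 1) - a (n + 2))
            + α₂ * (a (n + 2) / (b (n + 1) * b (n + 2)) - a (n + 1) / (b n * b (n + 1))) = 0 := by
          have h0 := hb n
          have h1' := hb (n + 1)
          have h2' := hb (n + 2)
          field_simp
          field_simp at H2
          linear_combination H2
        push_cast
        linear_combination ih2 - H2'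
  refine ⟨A₀, B₀, key, ?_⟩
  intro hden
  have hform : ∀ n : ℕ, a (n + 1) =
      ((n : ℝ) * α + B₀) * b n * b (n + 1) / (α₁ * b n * b (n + 1) - α₂) := by
    intro n
    have g2 := (key n).2
    rw [eq_div_iff (hden n)]
    have h0 := hb n
    have h1' := hb (n + 1)
    field_simp at g2
    linear_combination g2
  refine ⟨hform, ?_⟩
  intro n hn
  obtain ⟨m, rfl⟩ : ∃ m, n = m + 1 := ⟨n - 1, by omega⟩
  simp only [Nat.add_sub_cancel]
  have g1 := (key (m + 1)).1
  have f1 := hform (m + 1)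
  have f2 := hform m
  push_cast at g1 f1 f2 ⊢
  linear_combination g1 + α₁ * f1 + α₁ * f2
end

section
/- Let α, α₁, α₂ ∈ ℝ and let (u_n)_{n≥0}, (v_n)_{n≥0} be sequences of positive reals satisfying, for all n ≥ 2, the stationary nonisospectral C-Toda system: 2α u_n + α₁ u_n(v_n − v_{n−1}) − (1/2) α₂ u_n[(v_{n−1}² − v_n²) + 4(u_{n+1} − u_{n−1}) − 4(√(v_n v_{n+1} u_{n+1}) − √(v_{n−2} v_{n−1} u_{n−1}))] = 0 and α v_n + 2α₁(√(v_n v_{n+1} u_{n+1}) − √(v_{n−1} v_n u_n)) − α₂[(v_{n−1}√(v_{n−1} v_n u_n) − v_n√(v_n v_{n+1} u_{n+1})) − 2(√(v_n v_{n+2} u_{n+1} u_{n+2}) − √(v_{n−2} v_n u_{n−1} u_n)) − (v_{n+1}√(v_n v_{n+1} u_{n+1}) − v_n√(v_{n−1} v_n u_n))] = 0. Then there exists a real constant A₀ such that for all n ≥ 1: α₁ v_n + 2nα + A₀ + (1/2)α₂(v_n² − 4u_{n+1} − 4u_n + 4√(v_n v_{n+1} u_{n+1}) + 4√(v_n v_{n−1}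 u_n)) = 0, and for all n ≥ 2: α√(v_n) + α₁(√(v_{n+1} u_{n+1}) − √(v_{n−1} u_n)) + α₂((v_n + v_{n+1}/2)√(v_{n+1} u_{n+1}) − (v_n + v_{n−1}/2)√(v_{n−1} u_n)) − √(u_{n+1}/v_{n+1})·(α₂(−2u_{n+2} − 2u_{n+1} + 2√(v_n v_{n+1} u_{n+1})) + 2(n+1)α + A₀) + √(u_n/v_{n−1})·(α₂(−2u_n − 2u_{n−1} + 2√(v_n v_{n−1} u_n)) + 2(n−1)α + A₀) = 0. -/
open Real


/-- Auxiliary first integral of the stationary nonisospectral C-Toda lattice,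
expressed in terms of `p k = √(v k)` and `q k = √(u k)`, at shifted index `m`
(corresponding to `n = m + 1`). -/
noncomputable def Gaux (α α₁ α₂ : ℝ) (p q : ℕ → ℝ) (m : ℕ) : ℝ :=
  α₁ * p (m + 1) ^ 2 + 2 * ((m : ℝ) + 1) * α
    + (1 / 2) * α₂ * (p (m + 1) ^ 4 - 4 * q (m + 2) ^ 2 - 4 * q (m + 1) ^ 2
        + 4 * p (m + 1) * p (m + 2) * q (m + 2) + 4 * p (m + 1) * p m * q (m + 1))

/-- The discrete Painlevé-type system associated with the Toda hierarchy of CKP type,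
obtained as the first integrals of the stationary (reduction of the) nonisospectral
C-Toda lattice. Here `u`, `v` are the variables of the four-term recurrence of Cauchy
biorthogonal polynomials. -/
theorem stationary_CToda_dP
    (α α₁ α₂ : ℝ) (u v : ℕ → ℝ)
    (hu : ∀ n, 0 < u n) (hv : ∀ n, 0 < v n)
    (h1 : ∀ n : ℕ, 2 ≤ n →
      2 * α * u n + α₁ * u n * (v n - v (n - 1))
        - (1 / 2) * α₂ * u n *
            (((v (n - 1)) ^ 2 - (v n) ^ 2) + 4 * (u (n + 1) - u (n - 1))
              - 4 * (Real.sqrt (v n * v (n + 1) * u (n + 1))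
                  - Real.sqrt (v (n - 2) * v (n - 1) * u (n - 1)))) = 0)
    (h2 : ∀ n : ℕ, 2 ≤ n →
      α * v n
        + 2 * α₁ * (Real.sqrt (v n * v (n + 1) * u (n + 1))
            - Real.sqrt (v (n - 1) * v n * u n))
        - α₂ *
            ((v (n - 1) * Real.sqrt (v (n - 1) * v n * u n)
                - v n * Real.sqrt (v n * v (n + 1) * u (n + 1)))
              - 2 * (Real.sqrt (v n * v (n + 2) * u (n + 1) * u (n + 2))
                  - Real.sqrt (v (n - 2) * v n * u (n - 1) * u n))
              - (v (n + 1) * Real.sqrt (v n * v (n + 1) * u (n + 1))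
                  - v n * Real.sqrt (v (n - 1) * v n * u n))) = 0) :
    ∃ A₀ : ℝ,
      (∀ n : ℕ, 1 ≤ n →
        α₁ * v n + 2 * (n : ℝ) * α + A₀
          + (1 / 2) * α₂ *
              ((v n) ^ 2 - 4 * u (n + 1) - 4 * u n
                + 4 * Real.sqrt (v n * v (n + 1) * u (n + 1))
                + 4 * Real.sqrt (v n * v (n - 1) * u n)) = 0) ∧
      (∀ n : ℕ, 2 ≤ n →
        α * Real.sqrt (v n)
          + α₁ * (Real.sqrt (v (n + 1) * u (n + 1)) - Real.sqrt (v (n - 1) * u n))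
          + α₂ * ((v n + (1 / 2) * v (n + 1)) * Real.sqrt (v (n + 1) * u (n + 1))
              - (v n + (1 / 2) * v (n - 1)) * Real.sqrt (v (n - 1) * u n))
          - Real.sqrt (u (n + 1) / v (n + 1)) *
              (α₂ * (-2 * u (n + 2) - 2 * u (n + 1)
                  + 2 * Real.sqrt (v n * v (n + 1) * u (n + 1)))
                + 2 * ((n : ℝ) + 1) * α + A₀)
          + Real.sqrt (u n / v (n - 1)) *
              (α₂ * (-2 * u n - 2 * u (n - 1)
                  + 2 * Real.sqrt (v n * v (n - 1) * u n))
                + 2 * ((n : ℝ) - 1) * α + A₀) = 0) := by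

  obtain ⟨p, hp⟩ : ∃ p : ℕ → ℝ, ∀ k, p k = Real.sqrt (v k) := ⟨_, fun _ => rfl⟩
  obtain ⟨q, hq⟩ : ∃ q : ℕ → ℝ, ∀ k, q k = Real.sqrt (u k) := ⟨_, fun _ => rfl⟩
  have hp0 : ∀ k, 0 < p k := fun k => by rw [hp]; exact Real.sqrt_pos.2 (hv k)
  have hq0 : ∀ k, 0 < q k := fun k => by rw [hq]; exact Real.sqrt_pos.2 (hu k)
  have hv2 : ∀ k, v k = p k ^ 2 := fun k => by rw [hp, Real.sq_sqrt (hv k).le]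
  have hu2 : ∀ k, u k = q k ^ 2 := fun k => by rw [hq, Real.sq_sqrt (hu k).le]
  have s1 : ∀ a, Real.sqrt (v a) = p a := fun a => (hp a).symm
  have s2 : ∀ a b, Real.sqrt (v a * u b) = p a * q b := fun a b => by
    rw [Real.sqrt_mul (hv a).le, hp, hq]
  have s3 : ∀ a b c, Real.sqrt (v a * v b * u c) = p a * p b * q c := fun a b c => by
    rw [Real.sqrt_mul (mul_nonneg (hv a).le (hv b).le), Real.sqrt_mul (hv a).le, hp, hp, hq]
  have s4 : ∀ a b c d, Real.sqrt (v a * v b * u c * u d) = p a * p b * q c * q d := by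
    intro a b c d
    rw [Real.sqrt_mul (mul_nonneg (mul_nonneg (hv a).le (hv b).le) (hu c).le),
      Real.sqrt_mul (mul_nonneg (hv a).le (hv b).le), Real.sqrt_mul (hv a).le, hp, hp, hq, hq]
  have sdiv : ∀ a b, Real.sqrt (u a / v b) = q a / p b := fun a b => by
    rw [Real.sqrt_div (hu a).le, hp, hq]
  have hG : ∀ m : ℕ, Gaux α α₁ α₂ p q m = Gaux α α₁ α₂ p q 0 := by
    intro m
    induction m with
    | zero => rfl
    | succ k ih =>
      have h := h1 (k + 2) (by omega)
      simp only [show k + 2 - 1 = k + 1 by omega, show k + 2 - 2 = k by omega] at h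
      simp only [s3, show k + 2 + 1 = k + 3 by omega] at h
      simp only [hv2, hu2] at h
      have key : q (k + 2) ^ 2 * (Gaux α α₁ α₂ p q (k + 1) - Gaux α α₁ α₂ p q k) = 0 := by
        simp only [Gaux, show k + 1 + 1 = k + 2 by omega, show k + 1 + 2 = k + 3 by omega]
        push_cast
        linear_combination h
      have hdiff := (mul_eq_zero.mp key).resolve_left (pow_ne_zero 2 (hq0 (k + 2)).ne')
      rw [sub_eq_zero] at hdiff
      rw [hdiff, ih]
  refine ⟨-Gaux α α₁ α₂ p q 0, ?_, ?_⟩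
  · intro n hn
    obtain ⟨m, rfl⟩ : ∃ m, n = m + 1 := ⟨n - 1, by omega⟩
    simp only [show m + 1 - 1 = m by omega]
    simp only [s3, show m + 1 + 1 = m + 2 by omega]
    simp only [hv2, hu2]
    have e := hG m
    simp only [Gaux] at e ⊢
    push_cast
    linear_combination e
  · intro n hn
    obtain ⟨m, rfl⟩ : ∃ m, n = m + 2 := ⟨n - 2, by omega⟩
    have h := h2 (m + 2) (by omega)
    simp only [show m + 2 - 1 = m + 1 by omega, show m + 2 - 2 = m by omega] at h
    simp only [s3, s4, show m + 2 + 1 = m + 3 by omega, show m + 2 + 2 = m + 4 by omega] at h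
    simp only [hv2, hu2] at h
    have e1 := hG (m + 2)
    have e2 := hG m
    simp only [Gaux, show m + 2 + 1 = m + 3 by omega, show m + 2 + 2 = m + 4 by omega] at e1 e2
    have hr : q (m + 3) / p (m + 3) * p (m + 3) = q (m + 3) :=
      div_mul_cancel₀ _ (hp0 (m + 3)).ne'
    have hs : q (m + 2) / p (m + 1) * p (m + 1) = q (m + 2) :=
      div_mul_cancel₀ _ (hp0 (m + 1)).ne'
    simp only [show m + 2 - 1 = m + 1 by omega]
    simp only [s1, s2, s3, sdiv, show m + 2 + 1 = m + 3 by omega,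
      show m + 2 + 2 = m + 4 by omega]
    simp only [hv2, hu2]
    simp only [Gaux]
    refine mul_left_cancel₀ (hp0 (m + 2)).ne' ?_
    linear_combination (norm := (push_cast; ring1))
      h - (q (m + 3) / p (m + 3) * p (m + 2)) * e1 + (q (m + 2) / p (m + 1) * p (m + 2)) * e2
      + (p (m + 2) * (α₁ * p (m + 3) + (1 / 2) * α₂ * p (m + 3) ^ 3
          + 2 * α₂ * p (m + 4) * q (m + 4))) * hr
      - (p (m + 2) * (α₁ * p (m + 1) + (1 / 2) * α₂ * p (m + 1) ^ 3
          + 2 * α₂ * p m * q (m + 1))) * hs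
end
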